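/- arXiv:1702.01433 — 11 statements merged into one kernel-verified Lean document; each statement's English description precedes it below -/
import Mathlib

section
/- The number of ordered pairs (H, K) of cyclic subgroups of a finite cyclic group G of order n = p₁^{α₁} ⋯ p_k^{α_k} (distinct primes p_i) with HK = G equals ∏_{i=1}^{k} (2α_i + 1). -/
open Pointwise

/-- The cyclic factorization number `CF₂(G)`: the number of ordered pairs `(H, K)` of
cyclic subgroups of `G` whose set product `HK` is all of `G`. -/
noncomputable def CF2 (G : Type*) [Group G] : ℕ :=
  Nat.card {p : Subgroup G × Subgroup G //
    IsCyclic p.1 ∧ IsCyclic p.2 ∧ (p.1 : Set G) * (p.2 : Set G) = Set.univ}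

/-! ### Counting pairs of divisors with given lcm -/

open Finset

/-- The number of ordered pairs of divisors of `n` whose lcm is `n`. -/
private def pairCount (n : ℕ) : ℕ :=
  ((n.divisors ×ˢ n.divisors).filter fun q => Nat.lcm q.1 q.2 = n).card

private lemma dvd_mul_eq {u v m n : ℕ} (hm : 0 < m) (hn : 0 < n)
    (hu : u ∣ m) (hv : v ∣ n) (h : u * v = m * n) : u = m ∧ v = n := by
  have hu' : u ≤ m := Nat.le_of_dvd hm hu
  have hv' : v ≤ n := Nat.le_of_dvd hn hv
  have hu0 : 0 < u := Nat.pos_of_dvd_of_pos hu hm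
  have hv0 : 0 < v := Nat.pos_of_dvd_of_pos hv hn
  constructor <;> nlinarith

private lemma lcm_mul_mul {a1 b1 a2 b2 m n : ℕ} (hcop : Nat.Coprime m n)
    (ha1 : a1 ∣ m) (hb1 : b1 ∣ m) (ha2 : a2 ∣ n) (hb2 : b2 ∣ n) :
    Nat.lcm (a1 * a2) (b1 * b2) = Nat.lcm a1 b1 * Nat.lcm a2 b2 := by
  apply Nat.dvd_antisymm
  · apply Nat.lcm_dvd
    · exact mul_dvd_mul (Nat.dvd_lcm_left _ _) (Nat.dvd_lcm_left _ _)
    · exact mul_dvd_mul (Nat.dvd_lcm_right _ _) (Nat.dvd_lcm_right _ _)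
  · have h1 : Nat.lcm a1 b1 ∣ m := Nat.lcm_dvd ha1 hb1
    have h2 : Nat.lcm a2 b2 ∣ n := Nat.lcm_dvd ha2 hb2
    have hc : Nat.Coprime (Nat.lcm a1 b1) (Nat.lcm a2 b2) :=
      Nat.Coprime.coprime_dvd_right h2 (Nat.Coprime.coprime_dvd_left h1 hcop)
    apply hc.mul_dvd_of_dvd_of_dvd
    · exact Nat.lcm_dvd ((dvd_mul_right a1 a2).trans (Nat.dvd_lcm_left _ _))
        ((dvd_mul_right b1 b2).trans (Nat.dvd_lcm_right _ _))
    · exact Nat.lcm_dvd ((dvd_mul_left a2 a1).trans (Nat.dvd_lcm_left _ _))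
        ((dvd_mul_left b2 b1).trans (Nat.dvd_lcm_right _ _))

private lemma pairCount_mul {m n : ℕ} (hm : m ≠ 0) (hn : n ≠ 0) (hcop : Nat.Coprime m n) :
    pairCount (m * n) = pairCount m * pairCount n := by
  classical
  have hmn : m * n ≠ 0 := mul_ne_zero hm hn
  unfold pairCount
  rw [← Finset.card_product]
  apply Finset.card_bij'
    (fun q _ => ((Nat.gcd q.1 m, Nat.gcd q.2 m), (Nat.gcd q.1 n, Nat.gcd q.2 n)))
    (fun q _ => (q.1.1 * q.2.1, q.1.2 * q.2.2))
  · -- maps into target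
    rintro ⟨a, b⟩ hq
    simp only [Finset.mem_filter, Finset.mem_product, Nat.mem_divisors] at hq ⊢
    obtain ⟨⟨⟨ham, -⟩, hbm, -⟩, hlcm⟩ := hq
    have ha : Nat.gcd a m * Nat.gcd a n = a :=
      (Nat.gcd_mul_gcd_eq_iff_dvd_mul_of_coprime hcop).2 ham
    have hb : Nat.gcd b m * Nat.gcd b n = b :=
      (Nat.gcd_mul_gcd_eq_iff_dvd_mul_of_coprime hcop).2 hbm
    have hl : Nat.lcm (Nat.gcd a m) (Nat.gcd b m) * Nat.lcm (Nat.gcd a n) (Nat.gcd b n)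
        = m * n := by
      rw [← lcm_mul_mul hcop (Nat.gcd_dvd_right a m) (Nat.gcd_dvd_right b m)
        (Nat.gcd_dvd_right a n) (Nat.gcd_dvd_right b n), ha, hb, hlcm]
    have h1 : Nat.lcm (Nat.gcd a m) (Nat.gcd b m) ∣ m :=
      Nat.lcm_dvd (Nat.gcd_dvd_right _ _) (Nat.gcd_dvd_right _ _)
    have h2 : Nat.lcm (Nat.gcd a n) (Nat.gcd b n) ∣ n :=
      Nat.lcm_dvd (Nat.gcd_dvd_right _ _) (Nat.gcd_dvd_right _ _)
    obtain ⟨e1, e2⟩ := dvd_mul_eq (Nat.pos_of_ne_zero hm) (Nat.pos_of_ne_zero hn) h1 h2 hl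
    refine ⟨⟨⟨⟨Nat.gcd_dvd_right _ _, hm⟩, Nat.gcd_dvd_right _ _, hm⟩, e1⟩,
      ⟨⟨Nat.gcd_dvd_right _ _, hn⟩, Nat.gcd_dvd_right _ _, hn⟩, e2⟩
  · -- reverse maps into source
    rintro ⟨⟨a1, b1⟩, ⟨a2, b2⟩⟩ hq
    simp only [Finset.mem_filter, Finset.mem_product, Nat.mem_divisors] at hq ⊢
    obtain ⟨⟨⟨⟨ha1, -⟩, hb1, -⟩, hl1⟩, ⟨⟨ha2, -⟩, hb2, -⟩, hl2⟩ := hq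
    refine ⟨⟨⟨mul_dvd_mul ha1 ha2, hmn⟩, mul_dvd_mul hb1 hb2, hmn⟩, ?_⟩
    rw [lcm_mul_mul hcop ha1 hb1 ha2 hb2, hl1, hl2]
  · -- left inverse
    rintro ⟨a, b⟩ hq
    simp only [Finset.mem_filter, Finset.mem_product, Nat.mem_divisors] at hq
    obtain ⟨⟨⟨ham, -⟩, hbm, -⟩, -⟩ := hq
    simp only [Prod.mk.injEq]
    exact ⟨(Nat.gcd_mul_gcd_eq_iff_dvd_mul_of_coprime hcop).2 ham,
      (Nat.gcd_mul_gcd_eq_iff_dvd_mul_of_coprime hcop).2 hbm⟩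
  · -- right inverse
    rintro ⟨⟨a1, b1⟩, ⟨a2, b2⟩⟩ hq
    simp only [Finset.mem_filter, Finset.mem_product, Nat.mem_divisors] at hq
    obtain ⟨⟨⟨⟨ha1, -⟩, hb1, -⟩, -⟩, ⟨⟨ha2, -⟩, hb2, -⟩, -⟩ := hq
    have g1 : ∀ {x y : ℕ}, x ∣ m → y ∣ n → Nat.gcd (x * y) m = x := fun hx hy => by
      rw [Nat.Coprime.gcd_mul_right_cancel _
        (Nat.Coprime.coprime_dvd_left hy hcop.symm), Nat.gcd_eq_left hx]
    have g2 : ∀ {x y : ℕ}, x ∣ m → y ∣ n → Nat.gcd (x * y) n = y := fun hx hy => by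
      rw [mul_comm, Nat.Coprime.gcd_mul_right_cancel _
        (Nat.Coprime.coprime_dvd_left hx hcop), Nat.gcd_eq_left hy]
    simp only [Prod.mk.injEq]
    exact ⟨⟨g1 ha1 ha2, g1 hb1 hb2⟩, g2 ha1 ha2, g2 hb1 hb2⟩

private lemma pairCount_one : pairCount 1 = 1 := by
  unfold pairCount
  decide

private lemma pairCount_prime_pow {p k : ℕ} (hp : p.Prime) :
    pairCount (p ^ k) = 2 * k + 1 := by
  classical
  unfold pairCount
  have hinj : Function.Injective (p ^ ·) := Nat.pow_right_injective hp.two_le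
  have hlcm : ∀ i j, Nat.lcm (p ^ i) (p ^ j) = p ^ max i j := by
    intro i j
    rcases le_total i j with h | h
    · rw [max_eq_right h]
      exact Nat.dvd_antisymm (Nat.lcm_dvd (pow_dvd_pow p h) dvd_rfl) (Nat.dvd_lcm_right _ _)
    · rw [max_eq_left h]
      exact Nat.dvd_antisymm (Nat.lcm_dvd dvd_rfl (pow_dvd_pow p h)) (Nat.dvd_lcm_left _ _)
  have key : ((p ^ k).divisors ×ˢ (p ^ k).divisors).filter (fun q => Nat.lcm q.1 q.2 = p ^ k)
      = ((range (k + 1) ×ˢ range (k + 1)).filter fun q => max q.1 q.2 = k).image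
        (fun q => (p ^ q.1, p ^ q.2)) := by
    ext ⟨a, b⟩
    simp only [Finset.mem_filter, Finset.mem_product, Nat.mem_divisors, Finset.mem_image,
      Finset.mem_range, Prod.mk.injEq, Prod.exists]
    constructor
    · rintro ⟨⟨⟨ha, -⟩, ⟨hb, -⟩⟩, hl⟩
      obtain ⟨i, hik, rfl⟩ := (Nat.dvd_prime_pow hp).1 ha
      obtain ⟨j, hjk, rfl⟩ := (Nat.dvd_prime_pow hp).1 hb
      rw [hlcm] at hl
      exact ⟨i, j, ⟨⟨by omega, by omega⟩, hinj hl⟩, rfl, rfl⟩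
    · rintro ⟨i, j, ⟨⟨hik, hjk⟩, hmax⟩, rfl, rfl⟩
      refine ⟨⟨⟨pow_dvd_pow p (by omega), pow_ne_zero _ hp.pos.ne'⟩,
        ⟨pow_dvd_pow p (by omega), pow_ne_zero _ hp.pos.ne'⟩⟩, ?_⟩
      rw [hlcm, hmax]
  rw [key, Finset.card_image_of_injective _ (fun x y h => by
    simp only [Prod.mk.injEq] at h
    exact Prod.ext (hinj h.1) (hinj h.2))]
  have key2 : ((range (k + 1) ×ˢ range (k + 1)).filter fun q => max q.1 q.2 = k)
      = ((range (k + 1)).image fun i => (i, k)) ∪ ((range (k + 1)).image fun j => (k, j)) := by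
    ext ⟨i, j⟩
    simp only [Finset.mem_filter, Finset.mem_product, Finset.mem_range, Finset.mem_union,
      Finset.mem_image, Prod.mk.injEq]
    constructor
    · rintro ⟨⟨hi, hj⟩, hmax⟩
      rcases (by omega : j = k ∨ i = k) with h | h
      · exact Or.inl ⟨i, hi, rfl, h.symm⟩
      · exact Or.inr ⟨j, hj, h.symm, rfl⟩
    · rintro (⟨x, hx, rfl, rfl⟩ | ⟨x, hx, rfl, rfl⟩) <;>
        exact ⟨⟨by omega, by omega⟩, by omega⟩
  rw [key2]
  have hi1 : ((range (k + 1)).image fun i => (i, k)).card = k + 1 := by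
    rw [Finset.card_image_of_injective _ (fun x y h => by simpa using h), Finset.card_range]
  have hi2 : ((range (k + 1)).image fun j => (k, j)).card = k + 1 := by
    rw [Finset.card_image_of_injective _ (fun x y h => by simpa using h), Finset.card_range]
  have hinter : ((range (k + 1)).image fun i => (i, k)) ∩
      ((range (k + 1)).image fun j => (k, j)) = {(k, k)} := by
    ext ⟨i, j⟩
    simp only [Finset.mem_inter, Finset.mem_image, Finset.mem_range, Finset.mem_singleton,
      Prod.mk.injEq]
    constructor
    · rintro ⟨⟨x, hx, rfl, rfl⟩, ⟨y, hy, h1, h2⟩⟩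
      exact ⟨h1.symm, rfl⟩
    · rintro ⟨h1, h2⟩
      exact ⟨⟨i, by omega, rfl, by omega⟩, ⟨j, by omega, by omega, rfl⟩⟩
  have := Finset.card_union_add_card_inter ((range (k + 1)).image fun i => (i, k))
    ((range (k + 1)).image fun j => (k, j))
  rw [hi1, hi2, hinter, Finset.card_singleton] at this
  omega

private lemma pairCount_eq {n : ℕ} (hn : n ≠ 0) :
    pairCount n = ∏ q ∈ n.primeFactors, (2 * n.factorization q + 1) := by
  have hmult : ∀ x y : ℕ, Nat.Coprime x y → pairCount (x * y) = pairCount x * pairCount y := by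
    intro x y hxy
    rcases eq_or_ne x 0 with rfl | hx
    · have : y = 1 := by simpa [Nat.coprime_zero_left] using hxy
      subst this
      simp [pairCount_one]
    rcases eq_or_ne y 0 with rfl | hy
    · have : x = 1 := by simpa [Nat.coprime_zero_right] using hxy
      subst this
      simp [pairCount_one]
    exact pairCount_mul hx hy hxy
  rw [Nat.multiplicative_factorization pairCount hmult pairCount_one hn]
  rw [Nat.prod_factorization_eq_prod_primeFactors]
  exact Finset.prod_congr rfl fun p hp =>
    pairCount_prime_pow (Nat.prime_of_mem_primeFactors hp)

/-! ### Subgroups of a finite cyclic group -/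

section Cyclic

variable {G : Type*} [Group G] [Fintype G] (hG : IsCyclic G)

include hG

private lemma subgroup_coe_eq (H : Subgroup G) :
    (H : Set G) = {x : G | x ^ Nat.card H = 1} := by
  classical
  have hd : 0 < Nat.card H := Nat.card_pos
  have hsub : ∀ x ∈ H, x ^ Nat.card H = 1 := by
    intro x hx
    have : (⟨x, hx⟩ : H) ^ Nat.card H = 1 := pow_card_eq_one'
    exact congrArg Subtype.val this
  have hle : (Finset.univ.filter fun a : G => a ^ Nat.card H = 1).card ≤ Nat.card H :=
    hG.card_pow_eq_one_le hd
  have hHsub : Set.toFinset (H : Set G) ⊆ Finset.univ.filter fun a : G =>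
      a ^ Nat.card H = 1 := by
    intro y hy
    rw [Set.mem_toFinset] at hy
    rw [Finset.mem_filter]
    exact ⟨Finset.mem_univ y, hsub y hy⟩
  have hcardH : (Set.toFinset (H : Set G)).card = Nat.card H := by
    simp [Set.toFinset_card, ← Nat.card_eq_fintype_card]
  have heq := Finset.eq_of_subset_of_card_le hHsub (by omega)
  ext x
  constructor
  · intro hx
    exact hsub x hx
  · intro hx
    have hmem : x ∈ Finset.univ.filter fun a : G => a ^ Nat.card H = 1 := by
      simp only [Finset.mem_filter, Finset.mem_univ, true_and]
      exact hx
    rw [← heq, Set.mem_toFinset] at hmem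
    exact hmem

private lemma subgroup_eq_of_card_eq {H K : Subgroup G}
    (h : Nat.card H = Nat.card K) : H = K := by
  apply SetLike.coe_injective
  rw [subgroup_coe_eq hG H, subgroup_coe_eq hG K, h]

private lemma exists_subgroup_card {d : ℕ} (hd : d ∣ Nat.card G) :
    ∃ H : Subgroup G, Nat.card H = d := by
  obtain ⟨g, hg⟩ := hG.exists_generator
  have horder : orderOf g = Nat.card G := orderOf_eq_card_of_forall_mem_zpowers hg
  have hn : 0 < Nat.card G := Nat.card_pos
  have hd0 : 0 < d := Nat.pos_of_dvd_of_pos hd hn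
  refine ⟨Subgroup.zpowers (g ^ (Nat.card G / d)), ?_⟩
  rw [Nat.card_zpowers, orderOf_pow, horder]
  rw [Nat.gcd_eq_right (Nat.div_dvd_of_dvd hd), Nat.div_div_self hd hn.ne']

private lemma le_of_card_dvd {H K : Subgroup G}
    (h : Nat.card H ∣ Nat.card K) : H ≤ K := by
  intro x hx
  have hx' : x ∈ (H : Set G) := hx
  rw [subgroup_coe_eq hG H] at hx'
  have : x ^ Nat.card K = 1 := by
    obtain ⟨c, hc⟩ := h
    rw [hc, pow_mul, hx', one_pow]
  have : x ∈ (K : Set G) := by rw [subgroup_coe_eq hG K]; exact this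
  exact this

private lemma card_sup (H K : Subgroup G) :
    Nat.card (H ⊔ K : Subgroup G) = Nat.lcm (Nat.card H) (Nat.card K) := by
  have hl : Nat.lcm (Nat.card H) (Nat.card K) ∣ Nat.card G :=
    Nat.lcm_dvd (Subgroup.card_subgroup_dvd_card H) (Subgroup.card_subgroup_dvd_card K)
  obtain ⟨L, hL⟩ := exists_subgroup_card hG hl
  apply Nat.dvd_antisymm
  · have hHL : H ≤ L := le_of_card_dvd hG (hL ▸ Nat.dvd_lcm_left _ _)
    have hKL : K ≤ L := le_of_card_dvd hG (hL ▸ Nat.dvd_lcm_right _ _)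
    have : H ⊔ K ≤ L := sup_le hHL hKL
    exact hL ▸ Subgroup.card_dvd_of_le this
  · exact Nat.lcm_dvd (Subgroup.card_dvd_of_le le_sup_left)
      (Subgroup.card_dvd_of_le le_sup_right)

end Cyclic

theorem cf2_cyclic (G : Type*) [Group G] [Fintype G] (hG : IsCyclic G) :
    CF2 G = ∏ q ∈ (Nat.card G).primeFactors, (2 * (Nat.card G).factorization q + 1) := by
  classical
  letI : CommGroup G := hG.commGroup
  set n := Nat.card G with hn
  have hn0 : n ≠ 0 := Nat.card_pos.ne'
  -- Step 1: simplify the subtype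
  have e1 : CF2 G = Nat.card {p : Subgroup G × Subgroup G // p.1 ⊔ p.2 = ⊤} := by
    unfold CF2
    apply Nat.card_congr
    apply Equiv.subtypeEquivRight
    intro p
    have hmul : (p.1 : Set G) * (p.2 : Set G) = ↑(p.1 ⊔ p.2) :=
      (Subgroup.mul_normal p.1 p.2).symm
    constructor
    · rintro ⟨-, -, h⟩
      rw [hmul] at h
      exact (Subgroup.coe_eq_univ).1 h
    · intro h
      refine ⟨p.1.isCyclic, p.2.isCyclic, ?_⟩
      rw [hmul, h]
      simp
  -- Step 2: bijection with pairs of divisors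
  have e2 : Nat.card {p : Subgroup G × Subgroup G // p.1 ⊔ p.2 = ⊤}
      = pairCount n := by
    rw [pairCount, ← Nat.card_eq_finsetCard]
    apply Nat.card_congr
    have htop : ∀ p : Subgroup G × Subgroup G,
        p.1 ⊔ p.2 = ⊤ ↔ Nat.lcm (Nat.card p.1) (Nat.card p.2) = n := by
      intro p
      rw [← card_sup hG]
      constructor
      · rintro h; rw [h, hn]; exact Subgroup.card_top
      · intro h
        apply subgroup_eq_of_card_eq hG
        rw [h, hn, Subgroup.card_top]
    refine Equiv.ofBijective (fun p => ⟨(Nat.card p.1.1, Nat.card p.1.2), ?_⟩) ⟨?_, ?_⟩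
    · simp only [Finset.mem_filter, Finset.mem_product, Nat.mem_divisors]
      exact ⟨⟨⟨Subgroup.card_subgroup_dvd_card _, hn0⟩,
        ⟨Subgroup.card_subgroup_dvd_card _, hn0⟩⟩, (htop p.1).1 p.2⟩
    · rintro ⟨⟨H, K⟩, hp⟩ ⟨⟨H', K'⟩, hp'⟩ h
      simp only [Subtype.mk.injEq, Prod.mk.injEq] at h
      ext1
      exact Prod.ext (subgroup_eq_of_card_eq hG h.1) (subgroup_eq_of_card_eq hG h.2)
    · rintro ⟨⟨a, b⟩, hq⟩
      simp only [Finset.mem_filter, Finset.mem_product, Nat.mem_divisors] at hq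
      obtain ⟨⟨⟨ha, -⟩, ⟨hb, -⟩⟩, hlcm⟩ := hq
      obtain ⟨H, hH⟩ := exists_subgroup_card hG ha
      obtain ⟨K, hK⟩ := exists_subgroup_card hG hb
      refine ⟨⟨(H, K), ?_⟩, ?_⟩
      · rw [htop (H, K)]
        simp only
        rw [hH, hK, hlcm]
      · simp only [Subtype.mk.injEq, Prod.mk.injEq]
        exact ⟨hH, hK⟩
  rw [e1, e2, pairCount_eq hn0]
end

section
/- For any finite group G, CF₂(G) ≤ F₂(G), where F₂(G) counts ordered pairs (H,K) of arbitrary subgroups with HK = G; moreover equality holds if and only if G is cyclic. -/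
open Pointwise

/-- The factorization number `F₂(G)`: the number of ordered pairs `(H, K)` of
subgroups of `G` whose set product `HK` is all of `G`. -/
noncomputable def F2 (G : Type*) [Group G] : ℕ :=
  Nat.card {p : Subgroup G × Subgroup G // (p.1 : Set G) * (p.2 : Set G) = Set.univ}

theorem cf2_le_f2 (G : Type*) [Group G] [Fintype G] :
    CF2 G ≤ F2 G ∧ (CF2 G = F2 G ↔ IsCyclic G) := by
  classical
  set S : Set (Subgroup G × Subgroup G) :=
    {p | IsCyclic p.1 ∧ IsCyclic p.2 ∧ (p.1 : Set G) * (p.2 : Set G) = Set.univ} with hS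
  set T : Set (Subgroup G × Subgroup G) :=
    {p | (p.1 : Set G) * (p.2 : Set G) = Set.univ} with hT
  have hsub : S ⊆ T := fun p hp => hp.2.2
  have hCF : CF2 G = S.ncard := Nat.card_coe_set_eq S
  have hF : F2 G = T.ncard := Nat.card_coe_set_eq T
  have hTfin : T.Finite := Set.toFinite T
  have hle : CF2 G ≤ F2 G := by
    rw [hCF, hF]
    exact Set.ncard_le_ncard hsub hTfin
  refine ⟨hle, ?_, ?_⟩
  · intro heq
    have hST : S = T := by
      apply Set.eq_of_subset_of_ncard_le hsub _ hTfin
      rw [← hCF, ← hF, heq]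
    have htop : ((⊤ : Subgroup G), (⊤ : Subgroup G)) ∈ T := by
      simp [hT, Set.univ_mul_univ]
    rw [← hST] at htop
    have : IsCyclic (⊤ : Subgroup G) := htop.1
    exact isCyclic_of_surjective Subgroup.topEquiv.toMonoidHom
      Subgroup.topEquiv.surjective
  · intro hG
    have hST : S = T := by
      ext p
      exact ⟨fun hp => hp.2.2, fun hp => ⟨Subgroup.isCyclic p.1, Subgroup.isCyclic p.2, hp⟩⟩
    rw [hCF, hF, hST]
end

section
/- If G₁, ..., G_k are finite groups of pairwise coprime orders, then CF₂(G₁ × ⋯ × G_k) = ∏_{i=1}^k CF₂(G_i). -/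
open Pointwise

section Helpers

variable {k : ℕ}

private lemma prod_dvd_of_pairwise_coprime {ι : Type*} [DecidableEq ι] (s : Finset ι)
    (f : ι → ℕ) (n : ℕ)
    (hc : ∀ i ∈ s, ∀ j ∈ s, i ≠ j → Nat.Coprime (f i) (f j))
    (hd : ∀ i ∈ s, f i ∣ n) : ∏ i ∈ s, f i ∣ n := by
  induction s using Finset.induction with
  | empty => simpa using one_dvd n
  | @insert a s ha ih =>
    rw [Finset.prod_insert ha]
    have hcop : Nat.Coprime (f a) (∏ i ∈ s, f i) :=
      Nat.Coprime.prod_right fun j hj =>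
        hc a (Finset.mem_insert_self a s) j (Finset.mem_insert_of_mem hj)
          (fun e => ha (e ▸ hj))
    exact hcop.mul_dvd_of_dvd_of_dvd (hd a (Finset.mem_insert_self a s))
      (ih (fun i hi j hj hij => hc i (Finset.mem_insert_of_mem hi) j
        (Finset.mem_insert_of_mem hj) hij) fun i hi => hd i (Finset.mem_insert_of_mem hi))

variable (G : Fin k → Type*) [∀ i, Group (G i)] [∀ i, Fintype (G i)]

private lemma subgroup_eq_pi
    (h : ∀ i j, i ≠ j → Nat.Coprime (Nat.card (G i)) (Nat.card (G j)))
    (H : Subgroup (∀ i, G i)) :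
    H = Subgroup.pi Set.univ (fun i => H.map (Pi.evalMonoidHom G i)) := by
  classical
  apply le_antisymm
  · intro x hx i _
    exact ⟨x, hx, rfl⟩
  · intro x hx
    have key : ∀ i : Fin k, ∃ y ∈ H, y i = x i ∧ ∀ j, j ≠ i → y j = 1 := by
      intro i
      obtain ⟨g, hg, hgx⟩ := hx i trivial
      set m := ∏ j ∈ Finset.univ.erase i, Nat.card (G j) with hm
      have hcop : Nat.Coprime (Nat.card (G i)) m :=
        Nat.Coprime.prod_right fun j hj => h i j (fun e => (Finset.ne_of_mem_erase hj) e.symm)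
      obtain ⟨e, he1, he0⟩ := Nat.chineseRemainder hcop 1 0
      refine ⟨g ^ e, H.pow_mem hg e, ?_, ?_⟩
      · have : (g ^ e) i = (g i) ^ e := rfl
        rw [this, pow_eq_pow_iff_modEq.mpr, pow_one, ← hgx]; rfl
        exact (he1.of_dvd (orderOf_dvd_natCard (g i))).symm.symm
      · intro j hj
        have hdvd : orderOf (g j) ∣ e := by
          refine dvd_trans (dvd_trans (orderOf_dvd_natCard (g j)) ?_)
            (Nat.modEq_zero_iff_dvd.mp he0)
          exact Finset.dvd_prod_of_mem _ (Finset.mem_erase.mpr ⟨hj, Finset.mem_univ j⟩)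
        have : (g ^ e) j = (g j) ^ e := rfl
        rw [this, orderOf_dvd_iff_pow_eq_one.mp hdvd]
    choose y hy hyx hy1 using key
    have main : ∀ s : Finset (Fin k), (fun j => if j ∈ s then x j else 1) ∈ H := by
      intro s
      induction s using Finset.induction with
      | empty =>
        have : (fun j => if j ∈ (∅ : Finset (Fin k)) then x j else 1) = (1 : ∀ i, G i) := by
          funext j; simp
        rw [this]; exact H.one_mem
      | @insert a s ha ih =>
        have heq : (fun j => if j ∈ insert a s then x j else 1)
            = y a * (fun j => if j ∈ s then x j else 1) := by
          funext j
          rcases eq_or_ne j a with rfl | hj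
          · simpa [ha] using (hyx j).symm
          · by_cases hjs : j ∈ s <;> simp [hj, hjs, hy1 a j hj]
        rw [heq]
        exact H.mul_mem (hy a) ih
    have := main Finset.univ
    simpa using this

private lemma map_eval_pi (F : ∀ i, Subgroup (G i)) (i : Fin k) :
    (Subgroup.pi Set.univ F).map (Pi.evalMonoidHom G i) = F i := by
  classical
  apply le_antisymm
  · rintro _ ⟨x, hx, rfl⟩
    exact hx i trivial
  · intro y hy
    exact ⟨Pi.mulSingle i y, (Subgroup.mulSingle_mem_pi i y).mpr fun _ => hy,
      Pi.mulSingle_eq_same i y⟩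

/-- Equivalence between a pi subgroup and the pi of subgroups. -/
private def piSubEquiv (F : ∀ i, Subgroup (G i)) :
    ↥(Subgroup.pi Set.univ F) ≃ ∀ i, ↥(F i) where
  toFun x i := ⟨x.1 i, x.2 i trivial⟩
  invFun y := ⟨fun i => y i, fun i _ => (y i).2⟩
  left_inv _ := rfl
  right_inv _ := rfl

private lemma isCyclic_pi (F : ∀ i, Subgroup (G i)) (hF : ∀ i, IsCyclic (F i))
    (h : ∀ i j, i ≠ j → Nat.Coprime (Nat.card (G i)) (Nat.card (G j))) :
    IsCyclic (Subgroup.pi Set.univ F) := by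
  classical
  choose g hg using fun i => (hF i).exists_generator
  have horder : ∀ i, orderOf ((g i : G i)) = Nat.card (F i) := fun i => by
    rw [Subgroup.orderOf_coe, orderOf_eq_card_of_forall_mem_zpowers (hg i)]
  set x : ∀ i, G i := fun i => (g i : G i) with hx
  have hmem : x ∈ Subgroup.pi Set.univ F := fun i _ => (g i).2
  have hcard : Nat.card (Subgroup.pi Set.univ F) = ∏ i, Nat.card (F i) := by
    rw [Nat.card_congr (piSubEquiv G F), Nat.card_pi]
  refine isCyclic_of_orderOf_eq_card (⟨x, hmem⟩ : Subgroup.pi Set.univ F) ?_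
  rw [hcard, Subgroup.orderOf_mk x hmem]
  refine Nat.dvd_antisymm ?_ ?_
  · rw [← hcard]
    rw [← Subgroup.orderOf_mk x hmem]
    exact orderOf_dvd_natCard _
  · refine prod_dvd_of_pairwise_coprime Finset.univ _ _ ?_ ?_
    · intro i _ j _ hij
      exact ((h i j hij).coprime_dvd_left (Subgroup.card_subgroup_dvd_card (F i))).coprime_dvd_right
        (Subgroup.card_subgroup_dvd_card (F j))
    · intro i _
      rw [← horder i]
      exact orderOf_map_dvd (Pi.evalMonoidHom G i) x

private lemma map_cyclic (H : Subgroup (∀ i, G i)) (hH : IsCyclic H) (i : Fin k) :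
    IsCyclic (H.map (Pi.evalMonoidHom G i)) :=
  isCyclic_of_surjective _ ((Pi.evalMonoidHom G i).subgroupMap_surjective H)

private lemma pi_mul_pi (H K : ∀ i, Subgroup (G i))
    (hall : ∀ i, (H i : Set (G i)) * (K i : Set (G i)) = Set.univ) :
    (Subgroup.pi Set.univ H : Set (∀ i, G i)) * (Subgroup.pi Set.univ K : Set (∀ i, G i))
      = Set.univ := by
  rw [Set.eq_univ_iff_forall]
  intro x
  have hex : ∀ i, ∃ a ∈ H i, ∃ b ∈ K i, a * b = x i := by
    intro i
    have : x i ∈ (H i : Set (G i)) * (K i : Set (G i)) := by rw [hall i]; trivial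
    exact Set.mem_mul.mp this
  choose a ha b hb hab using hex
  exact Set.mem_mul.mpr ⟨a, fun i _ => ha i, b, fun i _ => hb i, funext hab⟩

private lemma map_mul_map (H K : Subgroup (∀ i, G i))
    (hHK : (H : Set (∀ i, G i)) * (K : Set (∀ i, G i)) = Set.univ) (i : Fin k) :
    ((H.map (Pi.evalMonoidHom G i) : Subgroup (G i)) : Set (G i))
      * ((K.map (Pi.evalMonoidHom G i) : Subgroup (G i)) : Set (G i)) = Set.univ := by
  classical
  rw [Set.eq_univ_iff_forall]
  intro y
  have : (Pi.mulSingle i y : ∀ i, G i) ∈ (H : Set (∀ i, G i)) * (K : Set (∀ i, G i)) := by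
    rw [hHK]; trivial
  obtain ⟨a, ha, b, hb, hab⟩ := Set.mem_mul.mp this
  refine Set.mem_mul.mpr ⟨a i, ⟨a, ha, rfl⟩, b i, ⟨b, hb, rfl⟩, ?_⟩
  have := congrFun hab i
  simpa using this

end Helpers

theorem cf2_pi {k : ℕ} (G : Fin k → Type*) [∀ i, Group (G i)] [∀ i, Fintype (G i)]
    (h : ∀ i j, i ≠ j → Nat.Coprime (Nat.card (G i)) (Nat.card (G j))) :
    CF2 (∀ i, G i) = ∏ i, CF2 (G i) := by
  classical
  let e : {p : Subgroup (∀ i, G i) × Subgroup (∀ i, G i) //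
      IsCyclic p.1 ∧ IsCyclic p.2 ∧ (p.1 : Set (∀ i, G i)) * (p.2 : Set (∀ i, G i)) = Set.univ}
      ≃ ∀ i, {p : Subgroup (G i) × Subgroup (G i) //
      IsCyclic p.1 ∧ IsCyclic p.2 ∧ (p.1 : Set (G i)) * (p.2 : Set (G i)) = Set.univ} :=
    { toFun := fun p i => ⟨(p.1.1.map (Pi.evalMonoidHom G i), p.1.2.map (Pi.evalMonoidHom G i)),
        map_cyclic G p.1.1 p.2.1 i,
        map_cyclic G p.1.2 p.2.2.1 i,
        map_mul_map G p.1.1 p.1.2 p.2.2.2 i⟩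
      invFun := fun q => ⟨(Subgroup.pi Set.univ fun i => (q i).1.1,
          Subgroup.pi Set.univ fun i => (q i).1.2),
        isCyclic_pi G _ (fun i => (q i).2.1) h,
        isCyclic_pi G _ (fun i => (q i).2.2.1) h,
        pi_mul_pi G _ _ fun i => (q i).2.2.2⟩
      left_inv := fun p => Subtype.ext (Prod.ext
        (subgroup_eq_pi G h p.1.1).symm (subgroup_eq_pi G h p.1.2).symm)
      right_inv := fun q => funext fun i => Subtype.ext (Prod.ext
        (map_eval_pi G _ i) (map_eval_pi G _ i)) }
  rw [CF2, Nat.card_congr e, Nat.card_pi]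
  rfl
end

section
/- For two finite groups G and G' of coprime orders, CF₂(G × G') = CF₂(G) · CF₂(G'). -/
open Pointwise

section Aux

variable {G G' : Type*} [Group G] [Group G']

lemma aux_set_prod_mul (s u : Set G) (t v : Set G') :
    (s ×ˢ t) * (u ×ˢ v) = (s * u) ×ˢ (t * v) := by
  ext ⟨x, y⟩
  constructor
  · rintro ⟨⟨a, c⟩, ⟨ha, hc⟩, ⟨b, d⟩, ⟨hb, hd⟩, hx⟩
    obtain ⟨h1, h2⟩ := Prod.ext_iff.mp hx
    exact ⟨⟨a, ha, b, hb, h1⟩, ⟨c, hc, d, hd, h2⟩⟩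
  · rintro ⟨⟨a, ha, b, hb, h1⟩, ⟨c, hc, d, hd, h2⟩⟩
    exact ⟨(a, c), ⟨ha, hc⟩, (b, d), ⟨hb, hd⟩, Prod.ext h1 h2⟩

lemma aux_prod_eq_univ (s : Set G) (t : Set G') :
    s ×ˢ t = Set.univ ↔ s = Set.univ ∧ t = Set.univ := by
  constructor
  · intro H
    constructor
    · ext x
      simpa using (Set.eq_univ_iff_forall.mp H (x, 1)).1
    · ext y
      simpa using (Set.eq_univ_iff_forall.mp H (1, y)).2
  · rintro ⟨rfl, rfl⟩
    exact Set.univ_prod_univ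

lemma aux_isCyclic_prod {A B : Type*} [Group A] [Group B] [Finite A] [Finite B]
    (h : (Nat.card A).Coprime (Nat.card B)) [IsCyclic A] [IsCyclic B] : IsCyclic (A × B) := by
  obtain ⟨a, ha⟩ := isCyclic_iff_exists_orderOf_eq_natCard.mp ‹IsCyclic A›
  obtain ⟨b, hb⟩ := isCyclic_iff_exists_orderOf_eq_natCard.mp ‹IsCyclic B›
  apply isCyclic_of_orderOf_eq_card (a, b)
  rw [Prod.orderOf_mk, ha, hb, Nat.Coprime.lcm_eq_mul h, Nat.card_prod]

variable [Finite G] [Finite G'] (h : Nat.Coprime (Nat.card G) (Nat.card G'))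

include h

lemma aux_key1 (L : Subgroup (G × G')) {x : G × G'} (hx : x ∈ L) : (x.1, (1 : G')) ∈ L := by
  obtain ⟨n, hn1, hn2⟩ := Nat.chineseRemainder h 1 0
  have hpow : x ^ n ∈ L := pow_mem hx n
  have h1 : x.1 ^ n = x.1 ^ 1 :=
    pow_eq_pow_iff_modEq.mpr (hn1.of_dvd (orderOf_dvd_natCard x.1))
  have h2 : x.2 ^ n = x.2 ^ 0 :=
    pow_eq_pow_iff_modEq.mpr (hn2.of_dvd (orderOf_dvd_natCard x.2))
  have : x ^ n = (x.1, (1 : G')) := by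
    ext
    · simpa using h1
    · simpa using h2
  rwa [this] at hpow

lemma aux_key2 (L : Subgroup (G × G')) {x : G × G'} (hx : x ∈ L) : ((1 : G), x.2) ∈ L := by
  obtain ⟨n, hn1, hn2⟩ := Nat.chineseRemainder h.symm 1 0
  have hpow : x ^ n ∈ L := pow_mem hx n
  have h1 : x.1 ^ n = x.1 ^ 0 :=
    pow_eq_pow_iff_modEq.mpr (hn2.of_dvd (orderOf_dvd_natCard x.1))
  have h2 : x.2 ^ n = x.2 ^ 1 :=
    pow_eq_pow_iff_modEq.mpr (hn1.of_dvd (orderOf_dvd_natCard x.2))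
  have : x ^ n = ((1 : G), x.2) := by
    ext
    · simpa using h1
    · simpa using h2
  rwa [this] at hpow

lemma aux_decomp (L : Subgroup (G × G')) :
    (L.map (MonoidHom.fst G G')).prod (L.map (MonoidHom.snd G G')) = L := by
  apply le_antisymm
  · rintro ⟨a, b⟩ ⟨ha, hb⟩
    obtain ⟨x, hx, hxa⟩ := ha
    obtain ⟨y, hy, hyb⟩ := hb
    have hxa' : x.1 = a := hxa
    have hyb' : y.2 = b := hyb
    have h1 : (a, (1 : G')) ∈ L := hxa' ▸ aux_key1 h L hx
    have h2 : ((1 : G), b) ∈ L := hyb' ▸ aux_key2 h L hy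
    have : (a, (1 : G')) * ((1 : G), b) = (a, b) := by simp
    exact this ▸ mul_mem h1 h2
  · intro x hx
    exact ⟨⟨x, hx, rfl⟩, ⟨x, hx, rfl⟩⟩

end Aux

section Aux2

variable {G G' : Type*} [Group G] [Group G']

lemma aux_map_fst_prod (H : Subgroup G) (H' : Subgroup G') :
    (H.prod H').map (MonoidHom.fst G G') = H := by
  ext x
  constructor
  · rintro ⟨⟨a, b⟩, ⟨ha, hb⟩, rfl⟩
    exact ha
  · intro hx
    exact ⟨(x, 1), ⟨hx, one_mem _⟩, rfl⟩

lemma aux_map_snd_prod (H : Subgroup G) (H' : Subgroup G') :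
    (H.prod H').map (MonoidHom.snd G G') = H' := by
  ext x
  constructor
  · rintro ⟨⟨a, b⟩, ⟨ha, hb⟩, rfl⟩
    exact hb
  · intro hx
    exact ⟨(1, x), ⟨one_mem _, hx⟩, rfl⟩

lemma aux_map_cyclic {H : Subgroup G} (hH : IsCyclic H) (f : G →* G') :
    IsCyclic (H.map f) := by
  exact isCyclic_of_surjective _ (f.subgroupMap_surjective H)

lemma aux_prod_cyclic [Finite G] [Finite G'] (h : Nat.Coprime (Nat.card G) (Nat.card G'))
    {H : Subgroup G} {H' : Subgroup G'} (hH : IsCyclic H) (hH' : IsCyclic H') :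
    IsCyclic (H.prod H') := by
  have hc : (Nat.card H).Coprime (Nat.card H') :=
    Nat.Coprime.coprime_dvd_right (Subgroup.card_subgroup_dvd_card H')
      (Nat.Coprime.coprime_dvd_left (Subgroup.card_subgroup_dvd_card H) h)
  have : IsCyclic (H × H') := aux_isCyclic_prod hc
  exact isCyclic_of_surjective (H.prodEquiv H').symm (H.prodEquiv H').symm.surjective

end Aux2

section Main

variable {G G' : Type*} [Group G] [Group G'] [Finite G] [Finite G']

lemma aux_fwd (h : Nat.Coprime (Nat.card G) (Nat.card G'))
    {H K : Subgroup (G × G')} (hH : IsCyclic H) (hK : IsCyclic K)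
    (huniv : (H : Set (G × G')) * (K : Set (G × G')) = Set.univ) :
    ((H.map (MonoidHom.fst G G') : Set G) * (K.map (MonoidHom.fst G G') : Set G) = Set.univ) ∧
    ((H.map (MonoidHom.snd G G') : Set G') * (K.map (MonoidHom.snd G G') : Set G') = Set.univ)
    := by
  have hH' := aux_decomp h H
  have hK' := aux_decomp h K
  rw [← hH', ← hK', Subgroup.coe_prod, Subgroup.coe_prod, aux_set_prod_mul] at huniv
  exact (aux_prod_eq_univ _ _).mp huniv

end Main

theorem cf2_prod (G G' : Type*) [Group G] [Group G'] [Fintype G] [Fintype G']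
    (h : Nat.Coprime (Nat.card G) (Nat.card G')) :
    CF2 (G × G') = CF2 G * CF2 G' := by
  rw [CF2, CF2, CF2, ← Nat.card_prod]
  apply Nat.card_congr
  exact
    { toFun := fun p =>
        (⟨(p.1.1.map (MonoidHom.fst G G'), p.1.2.map (MonoidHom.fst G G')),
          aux_map_cyclic p.2.1 _, aux_map_cyclic p.2.2.1 _,
          (aux_fwd h p.2.1 p.2.2.1 p.2.2.2).1⟩,
         ⟨(p.1.1.map (MonoidHom.snd G G'), p.1.2.map (MonoidHom.snd G G')),
          aux_map_cyclic p.2.1 _, aux_map_cyclic p.2.2.1 _,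
          (aux_fwd h p.2.1 p.2.2.1 p.2.2.2).2⟩),
      invFun := fun q =>
        ⟨(q.1.1.1.prod q.2.1.1, q.1.1.2.prod q.2.1.2),
         aux_prod_cyclic h q.1.2.1 q.2.2.1, aux_prod_cyclic h q.1.2.2.1 q.2.2.2.1, by
           rw [Subgroup.coe_prod, Subgroup.coe_prod, aux_set_prod_mul, q.1.2.2.2, q.2.2.2.2,
             Set.univ_prod_univ]⟩,
      left_inv := by
        rintro ⟨⟨H, K⟩, hc⟩
        simp only [Subtype.mk.injEq, Prod.mk.injEq]
        exact ⟨aux_decomp h H, aux_decomp h K⟩,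
      right_inv := by
        rintro ⟨⟨⟨H, K⟩, hc⟩, ⟨⟨H', K'⟩, hc'⟩⟩
        simp only [Prod.mk.injEq, Subtype.mk.injEq]
        exact ⟨⟨aux_map_fst_prod H H', aux_map_fst_prod K K'⟩,
          ⟨aux_map_snd_prod H H', aux_map_snd_prod K K'⟩⟩ }
end

section
/- CF₂(S₃ × ℤ₂) = 12, and in particular CF₂(S₃ × ℤ₂) ≠ CF₂(S₃) · CF₂(ℤ₂). -/
set_option maxRecDepth 100000
set_option maxHeartbeats 2000000

open Pointwise

def powF {G : Type*} [Group G] [DecidableEq G] (N : ℕ) (g : G) : Finset G :=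
  (Finset.range N).image (g ^ ·)

def Tset (G : Type*) [Group G] [Fintype G] [DecidableEq G] (N : ℕ) : Finset (Finset G × Finset G) :=
  (((Finset.univ : Finset (G × G)).filter fun q =>
      ∀ x : G, ∃ a ∈ powF N q.1, ∃ b ∈ powF N q.2, a * b = x).image
    fun q => (powF N q.1, powF N q.2))

lemma isCyclic_subgroup_iff {G : Type*} [Group G] (H : Subgroup G) :
    IsCyclic H ↔ ∃ g : G, Subgroup.zpowers g = H := by
  constructor
  · rintro ⟨⟨g, hgen⟩⟩
    refine ⟨(g : G), le_antisymm ?_ ?_⟩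
    · rw [Subgroup.zpowers_le]; exact g.2
    · intro x hx
      obtain ⟨n, hn⟩ := hgen ⟨x, hx⟩
      refine Subgroup.mem_zpowers_iff.mpr ⟨n, ?_⟩
      simpa using congrArg Subtype.val hn
  · rintro ⟨g, rfl⟩
    refine ⟨⟨⟨g, Subgroup.mem_zpowers g⟩, fun x => ?_⟩⟩
    obtain ⟨n, hn⟩ := Subgroup.mem_zpowers_iff.mp x.2
    exact Subgroup.mem_zpowers_iff.mpr ⟨n, Subtype.ext (by simpa using hn)⟩

lemma mem_powF {G : Type*} [Group G] [DecidableEq G] {N : ℕ} (hN0 : 0 < N) {g : G}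
    (hg : g ^ N = 1) {x : G} : x ∈ powF N g ↔ x ∈ Subgroup.zpowers g := by
  simp only [powF, Finset.mem_image, Finset.mem_range]
  constructor
  · rintro ⟨n, -, rfl⟩
    exact Subgroup.mem_zpowers_iff.mpr ⟨n, by simp⟩
  · intro hx
    obtain ⟨k, hk⟩ := Subgroup.mem_zpowers_iff.mp hx
    have hNz : ((N : ℤ)) ≠ 0 := by exact_mod_cast hN0.ne'
    have hnn : (0:ℤ) ≤ k % N := Int.emod_nonneg k hNz
    refine ⟨(k % (N:ℤ)).toNat, ?_, ?_⟩
    · have h2 := Int.emod_lt_of_pos k (by exact_mod_cast hN0 : (0:ℤ) < N)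
      omega
    · have key : g ^ (k % (N:ℤ)).toNat = g ^ k := by
        rw [← zpow_natCast, Int.toNat_of_nonneg hnn]
        conv_rhs => rw [← Int.emod_add_mul_ediv k N]
        rw [zpow_add, zpow_mul, zpow_natCast, hg, one_zpow, mul_one]
      exact key.trans hk

lemma CF2_eq (G : Type*) [Group G] [Fintype G] [DecidableEq G] (N : ℕ) (hN0 : 0 < N)
    (hN : ∀ g : G, g ^ N = 1) : CF2 G = (Tset G N).card := by
  classical
  set F : Subgroup G → Finset G := fun H => Finset.univ.filter (· ∈ H) with hFdef
  have hF : ∀ (H : Subgroup G) (x : G), x ∈ F H ↔ x ∈ H := by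
    intro H x; simp [hFdef]
  have hFpow : ∀ g : G, F (Subgroup.zpowers g) = powF N g := fun g =>
    Finset.ext fun x => by rw [hF, mem_powF hN0 (hN g)]
  set P : Subgroup G × Subgroup G → Prop := fun p =>
    IsCyclic p.1 ∧ IsCyclic p.2 ∧ (p.1 : Set G) * (p.2 : Set G) = Set.univ with hPdef
  have key : ∀ p : {p : Subgroup G × Subgroup G // P p},
      (F p.1.1, F p.1.2) ∈ Tset G N := by
    rintro ⟨⟨H, K⟩, hc1, hc2, hprod⟩
    obtain ⟨g, hg⟩ := (isCyclic_subgroup_iff H).mp hc1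
    obtain ⟨k, hk⟩ := (isCyclic_subgroup_iff K).mp hc2
    refine Finset.mem_image.mpr ⟨(g, k), Finset.mem_filter.mpr ⟨Finset.mem_univ _, ?_⟩, ?_⟩
    · intro x
      have : x ∈ (H : Set G) * (K : Set G) := hprod ▸ Set.mem_univ x
      obtain ⟨a, ha, b, hb, hab⟩ := this
      exact ⟨a, (mem_powF hN0 (hN g)).mpr (hg ▸ ha), b,
        (mem_powF hN0 (hN k)).mpr (hk ▸ hb), hab⟩
    · simp only [← hg, ← hk, hFpow]
  let f : {p : Subgroup G × Subgroup G // P p} → {t // t ∈ Tset G N} :=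
    fun p => ⟨(F p.1.1, F p.1.2), key p⟩
  have hinj : Function.Injective f := by
    rintro ⟨⟨H1, K1⟩, h1⟩ ⟨⟨H2, K2⟩, h2⟩ heq
    have e1 : F H1 = F H2 := congrArg (Prod.fst ∘ Subtype.val) heq
    have e2 : F K1 = F K2 := congrArg (Prod.snd ∘ Subtype.val) heq
    have : H1 = H2 := SetLike.ext fun x => by rw [← hF H1, e1, hF]
    have : K1 = K2 := SetLike.ext fun x => by rw [← hF K1, e2, hF]
    aesop
  have hsurj : Function.Surjective f := by
    rintro ⟨t, ht⟩
    obtain ⟨⟨g, k⟩, hq, rfl⟩ := Finset.mem_image.mp ht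
    have hq' := (Finset.mem_filter.mp hq).2
    refine ⟨⟨(Subgroup.zpowers g, Subgroup.zpowers k), ?_, ?_, ?_⟩, ?_⟩
    · exact (isCyclic_subgroup_iff _).mpr ⟨g, rfl⟩
    · exact (isCyclic_subgroup_iff _).mpr ⟨k, rfl⟩
    · refine Set.eq_univ_iff_forall.mpr fun x => ?_
      obtain ⟨a, ha, b, hb, hab⟩ := hq' x
      exact ⟨a, (mem_powF hN0 (hN g)).mp ha, b, (mem_powF hN0 (hN k)).mp hb, hab⟩
    · exact Subtype.ext (by simp [f, hFpow])
  have := Nat.card_eq_of_bijective f ⟨hinj, hsurj⟩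
  rw [CF2]
  rw [this, Nat.card_eq_fintype_card, Fintype.card_coe]

theorem cf2_s3_z2 :
    CF2 (Equiv.Perm (Fin 3) × Multiplicative (ZMod 2)) = 12 ∧
    CF2 (Equiv.Perm (Fin 3) × Multiplicative (ZMod 2)) ≠
      CF2 (Equiv.Perm (Fin 3)) * CF2 (Multiplicative (ZMod 2)) := by
  have h6 : CF2 (Equiv.Perm (Fin 3)) = 6 := by
    rw [CF2_eq _ 6 (by norm_num) (by decide)]; decide
  have h3 : CF2 (Multiplicative (ZMod 2)) = 3 := by
    rw [CF2_eq _ 2 (by norm_num) (by decide)]; decide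
  have h12 : CF2 (Equiv.Perm (Fin 3) × Multiplicative (ZMod 2)) = 12 := by
    rw [CF2_eq _ 6 (by norm_num) (by decide)]; decide
  exact ⟨h12, by rw [h12, h6, h3]; norm_num⟩
end

section
/- For every n ≥ 4, the symmetric group S_n admits no factorization as a product of two cyclic subgroups, i.e. CF₂(S_n) = 0. -/
open Pointwise

lemma cube_le_three_pow : ∀ k : ℕ, k ^ 3 ≤ 3 ^ k := by
  intro k
  induction k with
  | zero => norm_num
  | succ m ih =>
    rcases Nat.lt_or_ge m 3 with h | h
    · interval_cases m <;> norm_num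
    · have : (m + 1) ^ 3 ≤ 3 * m ^ 3 := by
        nlinarith [Nat.mul_le_mul_right (m * m) h, Nat.mul_le_mul_right m h]
      calc (m + 1) ^ 3 ≤ 3 * m ^ 3 := this
        _ ≤ 3 * 3 ^ m := by omega
        _ = 3 ^ (m + 1) := by ring

lemma multiset_lcm_dvd_prod (s : Multiset ℕ) : s.lcm ∣ s.prod := by
  induction s using Multiset.induction with
  | empty => simp
  | cons a s ih =>
    rw [Multiset.lcm_cons, Multiset.prod_cons]
    calc Nat.lcm a s.lcm ∣ a * s.lcm := Nat.lcm_dvd (Dvd.intro _ rfl) (Dvd.intro_left _ rfl)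
      _ ∣ a * s.prod := mul_dvd_mul_left a ih

lemma multiset_prod_cube_le (s : Multiset ℕ) : s.prod ^ 3 ≤ 3 ^ s.sum := by
  induction s using Multiset.induction with
  | empty => simp
  | cons a s ih =>
    rw [Multiset.prod_cons, Multiset.sum_cons, mul_pow, pow_add]
    exact Nat.mul_le_mul (cube_le_three_pow a) ih

lemma orderOf_perm_cube_le (n : ℕ) (σ : Equiv.Perm (Fin n)) : orderOf σ ^ 3 ≤ 3 ^ n := by
  rw [← Equiv.Perm.lcm_cycleType]
  have h1 : σ.cycleType.lcm ≤ σ.cycleType.prod :=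
    Nat.le_of_dvd (Multiset.prod_pos fun a ha => by
      have := Equiv.Perm.two_le_of_mem_cycleType ha; omega)
      (multiset_lcm_dvd_prod _)
  calc σ.cycleType.lcm ^ 3 ≤ σ.cycleType.prod ^ 3 := Nat.pow_le_pow_left h1 3
    _ ≤ 3 ^ σ.cycleType.sum := multiset_prod_cube_le _
    _ ≤ 3 ^ n := Nat.pow_le_pow_right (by norm_num) (by
        rw [Equiv.Perm.sum_cycleType]
        exact (σ.support.card_le_univ).trans_eq (by simp))

lemma nine_pow_lt_fact_cube (n : ℕ) (hn : 4 ≤ n) : 9 ^ n < (n.factorial) ^ 3 := by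
  induction n with
  | zero => omega
  | succ m ih =>
    rcases Nat.lt_or_ge m 4 with h | h
    · have hm3 : m = 3 := by omega
      subst hm3
      norm_num [Nat.factorial]
    · have ihm := ih (by omega)
      have hfac : (m + 1).factorial = (m + 1) * m.factorial := rfl
      have h5 : 5 ≤ m + 1 := by omega
      calc 9 ^ (m + 1) = 9 * 9 ^ m := by ring
        _ < 9 * m.factorial ^ 3 := (Nat.mul_lt_mul_left (by norm_num)).mpr ihm
        _ ≤ (m + 1) ^ 3 * m.factorial ^ 3 := by
            have : 9 ≤ (m + 1) ^ 3 := le_trans (by norm_num) (Nat.pow_le_pow_left h5 3)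
            exact Nat.mul_le_mul_right _ this
        _ = ((m + 1) * m.factorial) ^ 3 := by ring
        _ = (m + 1).factorial ^ 3 := by rw [hfac]

lemma card_cyclic_le (n : ℕ) (H : Subgroup (Equiv.Perm (Fin n))) (hH : IsCyclic H) :
    Nat.card H ^ 3 ≤ 3 ^ n := by
  obtain ⟨g, hg⟩ := hH.exists_generator
  have htop : Subgroup.zpowers g = ⊤ := (Subgroup.eq_top_iff' _).mpr hg
  have : Nat.card H = orderOf ((g : H) : Equiv.Perm (Fin n)) := by
    rw [Subgroup.orderOf_coe, ← Nat.card_zpowers, htop, Subgroup.card_top]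
  rw [this]
  exact orderOf_perm_cube_le n _

theorem cf2_symm_eq_zero (n : ℕ) (hn : 4 ≤ n) : CF2 (Equiv.Perm (Fin n)) = 0 := by
  rw [CF2, Nat.card_eq_zero]
  left
  constructor
  rintro ⟨⟨H, K⟩, hH, hK, hHK⟩
  have hcard : Nat.card (Equiv.Perm (Fin n)) ≤ Nat.card H * Nat.card K := by
    calc Nat.card (Equiv.Perm (Fin n)) = Nat.card (Set.univ : Set (Equiv.Perm (Fin n))) :=
          (Nat.card_congr (Equiv.Set.univ _)).symm
      _ = Nat.card ((H : Set (Equiv.Perm (Fin n))) * (K : Set (Equiv.Perm (Fin n)))) := by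
          rw [hHK]
      _ ≤ Nat.card (H : Set (Equiv.Perm (Fin n))) * Nat.card (K : Set (Equiv.Perm (Fin n))) :=
          Set.natCard_mul_le
      _ = Nat.card H * Nat.card K := rfl
  have hperm : Nat.card (Equiv.Perm (Fin n)) = n.factorial := by
    rw [Nat.card_eq_fintype_card, Fintype.card_perm, Fintype.card_fin]
  have hH3 := card_cyclic_le n H hH
  have hK3 := card_cyclic_le n K hK
  have : n.factorial ^ 3 ≤ (Nat.card H * Nat.card K) ^ 3 := by
    rw [← hperm]; exact Nat.pow_le_pow_left hcard 3
  have hbig : (Nat.card H * Nat.card K) ^ 3 ≤ 9 ^ n := by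
    calc (Nat.card H * Nat.card K) ^ 3 = Nat.card H ^ 3 * Nat.card K ^ 3 := by ring
      _ ≤ 3 ^ n * 3 ^ n := Nat.mul_le_mul hH3 hK3
      _ = 9 ^ n := by rw [← Nat.mul_pow]
  have := nine_pow_lt_fact_cube n hn
  omega
end

section
/- For every n ≥ 4, the alternating group A_n admits no factorization as a product of two cyclic subgroups, i.e. CF₂(A_n) = 0. -/
open Pointwise

section Ito

open scoped commutatorElement

variable {G : Type*} [Group G]

private lemma key1 {a b a1 a2 b2 : G} (h : b⁻¹ * a1 = a2 * b2)
    (c1 : a1 * a = a * a1) (c2 : a2 * a = a * a2) :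
    a1⁻¹ * ⁅a, b⁆ * a1 = ⁅a, b2⁻¹⁆ := by
  have hb : b * a2 = a1 * b2⁻¹ := by
    have ha1 : a1 = b * (a2 * b2) := by rw [← h, mul_inv_cancel_left]
    rw [ha1]; group
  have hc : a⁻¹ * a2 = a2 * a⁻¹ := ((show Commute a2 a from c2).inv_right.eq).symm
  have main : ⁅a, b⁆ * a1 = a1 * ⁅a, b2⁻¹⁆ := by
    calc ⁅a, b⁆ * a1 = a * (b * (a⁻¹ * (b⁻¹ * a1))) := by
          simp only [commutatorElement_def, mul_assoc]
      _ = a * (b * (a⁻¹ * (a2 * b2))) := by rw [h]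
      _ = a * (b * (a2 * (a⁻¹ * b2))) := by rw [← mul_assoc a⁻¹, hc, mul_assoc]
      _ = a * ((b * a2) * (a⁻¹ * b2)) := by rw [← mul_assoc b]
      _ = a * ((a1 * b2⁻¹) * (a⁻¹ * b2)) := by rw [hb]
      _ = (a * a1) * (b2⁻¹ * (a⁻¹ * b2)) := by simp only [mul_assoc]
      _ = (a1 * a) * (b2⁻¹ * (a⁻¹ * b2)) := by rw [← c1]
      _ = a1 * ⁅a, b2⁻¹⁆ := by simp only [commutatorElement_def, inv_inv, mul_assoc]
  rw [mul_assoc, main, inv_mul_cancel_left]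

private lemma key2 {a b b1 b3 a3 : G} (h : a⁻¹ * b1 = b3 * a3)
    (c1 : b1 * b = b * b1) (c2 : b3 * b = b * b3) :
    b1⁻¹ * ⁅a, b⁆ * b1 = ⁅a3⁻¹, b⁆ := by
  have h' : b1⁻¹ * ⁅b, a⁆ * b1 = ⁅b, a3⁻¹⁆ := key1 h c1 c2
  calc b1⁻¹ * ⁅a, b⁆ * b1 = (b1⁻¹ * ⁅b, a⁆ * b1)⁻¹ := by
        simp only [commutatorElement_def]; group
    _ = ⁅b, a3⁻¹⁆⁻¹ := by rw [h']
    _ = ⁅a3⁻¹, b⁆ := commutatorElement_inv b a3⁻¹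

theorem ito_isSolvable (A B : Subgroup G)
    (hA : ∀ x ∈ A, ∀ y ∈ A, x * y = y * x) (hB : ∀ x ∈ B, ∀ y ∈ B, x * y = y * x)
    (hAB : (A : Set G) * (B : Set G) = Set.univ) : IsSolvable G := by
  have hdec : ∀ g : G, ∃ a ∈ A, ∃ b ∈ B, g = a * b := by
    intro g
    have hg : g ∈ (A : Set G) * (B : Set G) := hAB ▸ Set.mem_univ g
    obtain ⟨a, ha, b, hb, hab⟩ := hg
    exact ⟨a, ha, b, hb, hab.symm⟩
  have hdec' : ∀ g : G, ∃ b ∈ B, ∃ a ∈ A, g = b * a := by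
    intro g
    obtain ⟨a, ha, b, hb, h⟩ := hdec g⁻¹
    exact ⟨b⁻¹, B.inv_mem hb, a⁻¹, A.inv_mem ha, by rw [← mul_inv_rev, ← h, inv_inv]⟩
  set S : Set G := {x | ∃ a ∈ A, ∃ b ∈ B, x = ⁅a, b⁆} with hS
  have conjA : ∀ a ∈ A, ∀ b ∈ B, ∀ a1 ∈ A, ∃ b' ∈ B, a1⁻¹ * ⁅a, b⁆ * a1 = ⁅a, b'⁆ := by
    intro a ha b hb a1 ha1
    obtain ⟨a2, ha2, b2, hb2, h⟩ := hdec (b⁻¹ * a1)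
    exact ⟨b2⁻¹, B.inv_mem hb2, key1 h (hA a1 ha1 a ha) (hA a2 ha2 a ha)⟩
  have conjB : ∀ a ∈ A, ∀ b ∈ B, ∀ b1 ∈ B, ∃ a' ∈ A, b1⁻¹ * ⁅a, b⁆ * b1 = ⁅a', b⁆ := by
    intro a ha b hb b1 hb1
    obtain ⟨b3, hb3, a3, ha3, h⟩ := hdec' (a⁻¹ * b1)
    exact ⟨a3⁻¹, A.inv_mem ha3, key2 h (hB b1 hb1 b hb) (hB b3 hb3 b hb)⟩
  have hcomm : ∀ x ∈ S, ∀ y ∈ S, Commute x y := by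
    rintro x ⟨a, ha, b, hb, rfl⟩ y ⟨a1, ha1, b1, hb1, rfl⟩
    obtain ⟨a2, ha2, b2, hb2, hd1⟩ := hdec (b⁻¹ * a1)
    obtain ⟨b3, hb3, a3, ha3, hd2⟩ := hdec' (a⁻¹ * b1)
    have e1 : a1⁻¹ * ⁅a, b⁆ * a1 = ⁅a, b2⁻¹⁆ :=
      key1 hd1 (hA a1 ha1 a ha) (hA a2 ha2 a ha)
    have e2 : b1⁻¹ * ⁅a, b2⁻¹⁆ * b1 = ⁅a3⁻¹, b2⁻¹⁆ :=
      key2 hd2 (hB b1 hb1 b2⁻¹ (B.inv_mem hb2)) (hB b3 hb3 b2⁻¹ (B.inv_mem hb2))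
    have e3 : b1⁻¹ * ⁅a, b⁆ * b1 = ⁅a3⁻¹, b⁆ :=
      key2 hd2 (hB b1 hb1 b hb) (hB b3 hb3 b hb)
    have e4 : a1⁻¹ * ⁅a3⁻¹, b⁆ * a1 = ⁅a3⁻¹, b2⁻¹⁆ :=
      key1 hd1 (hA a1 ha1 a3⁻¹ (A.inv_mem ha3)) (hA a2 ha2 a3⁻¹ (A.inv_mem ha3))
    have e5 : (a1 * b1)⁻¹ * ⁅a, b⁆ * (a1 * b1) = (b1 * a1)⁻¹ * ⁅a, b⁆ * (b1 * a1) := by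
      calc (a1 * b1)⁻¹ * ⁅a, b⁆ * (a1 * b1)
          = b1⁻¹ * (a1⁻¹ * ⁅a, b⁆ * a1) * b1 := by group
        _ = b1⁻¹ * ⁅a, b2⁻¹⁆ * b1 := by rw [e1]
        _ = ⁅a3⁻¹, b2⁻¹⁆ := e2
        _ = a1⁻¹ * ⁅a3⁻¹, b⁆ * a1 := e4.symm
        _ = a1⁻¹ * (b1⁻¹ * ⁅a, b⁆ * b1) * a1 := by rw [e3]
        _ = (b1 * a1)⁻¹ * ⁅a, b⁆ * (b1 * a1) := by group
    have key : ⁅a, b⁆ * ((a1 * b1) * (b1 * a1)⁻¹) = ((a1 * b1) * (b1 * a1)⁻¹) * ⁅a, b⁆ := by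
      calc ⁅a, b⁆ * ((a1 * b1) * (b1 * a1)⁻¹)
          = (a1 * b1) * ((a1 * b1)⁻¹ * ⁅a, b⁆ * (a1 * b1)) * (b1 * a1)⁻¹ := by group
        _ = (a1 * b1) * ((b1 * a1)⁻¹ * ⁅a, b⁆ * (b1 * a1)) * (b1 * a1)⁻¹ := by rw [e5]
        _ = ((a1 * b1) * (b1 * a1)⁻¹) * ⁅a, b⁆ := by group
    have huv : ⁅a1, b1⁆ = (a1 * b1) * (b1 * a1)⁻¹ := by
      simp only [commutatorElement_def]; group
    show ⁅a, b⁆ * ⁅a1, b1⁆ = ⁅a1, b1⁆ * ⁅a, b⁆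
    rw [huv]; exact key
  set N := Subgroup.closure S with hN
  have hSconj : ∀ g : G, ∀ x ∈ S, g⁻¹ * x * g ∈ S := by
    intro g x hx
    obtain ⟨a1, ha1, b1, hb1, hg⟩ := hdec g
    obtain ⟨a, ha, b, hb, rfl⟩ := hx
    obtain ⟨b', hb', e⟩ := conjA a ha b hb a1 ha1
    obtain ⟨a', ha', e2⟩ := conjB a ha b' hb' b1 hb1
    refine ⟨a', ha', b', hb', ?_⟩
    rw [hg]
    calc (a1 * b1)⁻¹ * ⁅a, b⁆ * (a1 * b1)
        = b1⁻¹ * (a1⁻¹ * ⁅a, b⁆ * a1) * b1 := by group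
      _ = b1⁻¹ * ⁅a, b'⁆ * b1 := by rw [e]
      _ = ⁅a', b'⁆ := e2
  have hNnormal : N.Normal := by
    constructor
    intro n hn g
    induction hn using Subgroup.closure_induction with
    | mem x hx =>
        have := hSconj g⁻¹ x hx
        rw [inv_inv] at this
        exact Subgroup.subset_closure this
    | one => simpa using N.one_mem
    | mul x y hx hy ihx ihy =>
        have : g * (x * y) * g⁻¹ = (g * x * g⁻¹) * (g * y * g⁻¹) := by group
        rw [this]; exact N.mul_mem ihx ihy
    | inv x hx ihx =>
        have : g * x⁻¹ * g⁻¹ = (g * x * g⁻¹)⁻¹ := by group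
        rw [this]; exact N.inv_mem ihx
  have hNcommG : ∀ x y : G, x ∈ N → y ∈ N → x * y = y * x := by
    intro x y hx hy
    refine Subgroup.closure_induction₂ (fun u v hu hv => hcomm u hu v hv)
      (fun u _ => (Commute.one_left u)) (fun u _ => (Commute.one_right u))
      (fun u v w _ _ _ h1 h2 => Commute.mul_left h1 h2)
      (fun u v w _ _ _ h1 h2 => Commute.mul_right h1 h2)
      (fun u v _ _ h => Commute.inv_left h)
      (fun u v _ _ h => Commute.inv_right h) hx hy
  haveI : Group.IsSolvable N := isSolvable_of_comm
    (fun x y => Subtype.ext (hNcommG x.1 y.1 x.2 y.2))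
  haveI := hNnormal
  haveI : Group.IsSolvable (G ⧸ N) := by
    apply isSolvable_of_comm
    intro x y
    induction x using QuotientGroup.induction_on with
    | H g1 =>
      induction y using QuotientGroup.induction_on with
      | H g2 =>
        have hmkAB : ∀ a ∈ A, ∀ b ∈ B,
            Commute ((QuotientGroup.mk' N) a) ((QuotientGroup.mk' N) b) := by
          intro a ha b hb
          have h1 : (QuotientGroup.mk' N) ⁅a, b⁆ = 1 := by
            rw [← MonoidHom.mem_ker, QuotientGroup.ker_mk']
            exact Subgroup.subset_closure ⟨a, ha, b, hb, rfl⟩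
          rw [map_commutatorElement] at h1
          exact commutatorElement_eq_one_iff_commute.mp h1
        obtain ⟨x1, hx1, y1, hy1, rfl⟩ := hdec g1
        obtain ⟨x2, hx2, y2, hy2, rfl⟩ := hdec g2
        show (QuotientGroup.mk' N) (x1 * y1) * (QuotientGroup.mk' N) (x2 * y2)
            = (QuotientGroup.mk' N) (x2 * y2) * (QuotientGroup.mk' N) (x1 * y1)
        rw [map_mul, map_mul]
        have c1 : Commute ((QuotientGroup.mk' N) x1) ((QuotientGroup.mk' N) x2) :=
          Commute.map (show Commute x1 x2 from hA x1 hx1 x2 hx2) (QuotientGroup.mk' N)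
        have c2 : Commute ((QuotientGroup.mk' N) x1) ((QuotientGroup.mk' N) y2) :=
          hmkAB x1 hx1 y2 hy2
        have c3 : Commute ((QuotientGroup.mk' N) y1) ((QuotientGroup.mk' N) x2) :=
          (hmkAB x2 hx2 y1 hy1).symm
        have c4 : Commute ((QuotientGroup.mk' N) y1) ((QuotientGroup.mk' N) y2) :=
          Commute.map (show Commute y1 y2 from hB y1 hy1 y2 hy2) (QuotientGroup.mk' N)
        exact (Commute.mul_left (c1.mul_right c2) (c3.mul_right c4)).eq
  exact solvable_of_ker_le_range N.subtype (QuotientGroup.mk' N)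
    (by rw [QuotientGroup.ker_mk', Subgroup.range_subtype])

end Ito

lemma alt_not_solvable {n : ℕ} (h5 : 5 ≤ n) :
    ¬ IsSolvable (alternatingGroup (Fin n)) := by
  intro h
  have hperm : IsSolvable (Equiv.Perm (Fin n)) :=
    solvable_of_ker_le_range (hG' := h) (alternatingGroup (Fin n)).subtype Equiv.Perm.sign
      (by rw [Subgroup.range_subtype]; exact le_of_eq rfl)
  exact Equiv.Perm.not_solvable (Fin n)
    (by rw [Cardinal.mk_fin]; exact_mod_cast h5) hperm

lemma subgroup_comm_of_isCyclic {G : Type*} [Group G] (H : Subgroup G) (hH : IsCyclic H) :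
    ∀ x ∈ H, ∀ y ∈ H, x * y = y * x := by
  obtain ⟨g, hg⟩ := hH.exists_generator
  intro x hx y hy
  obtain ⟨i, hi⟩ := Subgroup.mem_zpowers_iff.mp (hg ⟨x, hx⟩)
  obtain ⟨j, hj⟩ := Subgroup.mem_zpowers_iff.mp (hg ⟨y, hy⟩)
  have hx' : x = (g : G) ^ i := by
    have := congrArg (Subtype.val) hi
    simpa using this.symm
  have hy' : y = (g : G) ^ j := by
    have := congrArg (Subtype.val) hj
    simpa using this.symm
  rw [hx', hy']
  exact ((Commute.refl (g : G)).zpow_zpow i j).eq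

lemma orderOf_le_three_A4 (x : alternatingGroup (Fin 4)) : orderOf x ≤ 3 := by
  have horder : ∀ g : Equiv.Perm (Fin 4), g ∈ alternatingGroup (Fin 4) →
      g ^ 2 = 1 ∨ g ^ 3 = 1 := by
    have : ∀ g : Equiv.Perm (Fin 4), Equiv.Perm.sign g = 1 → g ^ 2 = 1 ∨ g ^ 3 = 1 := by decide
    intro g hg
    exact this g (Equiv.Perm.mem_alternatingGroup.mp hg)
  have hcoe : orderOf x = orderOf (x : Equiv.Perm (Fin 4)) :=
    (orderOf_injective (alternatingGroup (Fin 4)).subtype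
      (Subgroup.subtype_injective _) x).symm
  rcases horder x x.2 with h | h
  · have := Nat.le_of_dvd (by norm_num) (orderOf_dvd_of_pow_eq_one h)
    omega
  · have := Nat.le_of_dvd (by norm_num) (orderOf_dvd_of_pow_eq_one h)
    omega

theorem cf2_alternating_eq_zero (n : ℕ) (hn : 4 ≤ n) :
    CF2 (alternatingGroup (Fin n)) = 0 := by
  have : IsEmpty {p : Subgroup (alternatingGroup (Fin n)) × Subgroup (alternatingGroup (Fin n)) //
      IsCyclic p.1 ∧ IsCyclic p.2 ∧ (p.1 : Set (alternatingGroup (Fin n))) *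
        (p.2 : Set (alternatingGroup (Fin n))) = Set.univ} := by
    constructor
    rintro ⟨⟨H, K⟩, hH, hK, hprod⟩
    rcases eq_or_lt_of_le hn with h4 | h5
    · -- n = 4
      subst h4
      have hcard : Nat.card (alternatingGroup (Fin 4)) = 12 := by
        have h2 := two_mul_card_alternatingGroup (α := Fin 4)
        have h24 : Fintype.card (Equiv.Perm (Fin 4)) = 24 := by
          rw [Fintype.card_perm, Fintype.card_fin]; rfl
        rw [Nat.card_eq_fintype_card]
        omega
      have hbound : ∀ (L : Subgroup (alternatingGroup (Fin 4))), IsCyclic L →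
          Nat.card L ≤ 3 := by
        intro L hL
        obtain ⟨g, hg⟩ := hL.exists_generator
        have h1 : L = Subgroup.zpowers (g : alternatingGroup (Fin 4)) := by
          ext x
          constructor
          · intro hx
            obtain ⟨i, hi⟩ := Subgroup.mem_zpowers_iff.mp (hg ⟨x, hx⟩)
            exact Subgroup.mem_zpowers_iff.mpr ⟨i, by simpa using congrArg Subtype.val hi⟩
          · intro hx
            obtain ⟨i, hi⟩ := Subgroup.mem_zpowers_iff.mp hx
            rw [← hi]
            exact Subgroup.zpow_mem L g.2 i
        rw [h1, Nat.card_zpowers]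
        exact orderOf_le_three_A4 _
      have hle : (12 : ℕ) ≤ 9 := by
        calc (12 : ℕ) = Nat.card (alternatingGroup (Fin 4)) := hcard.symm
          _ = Nat.card (Set.univ : Set (alternatingGroup (Fin 4))) := by
              rw [Nat.card_coe_set_eq, Set.ncard_univ]
          _ = Nat.card ((H : Set (alternatingGroup (Fin 4))) *
                (K : Set (alternatingGroup (Fin 4)))) := by rw [hprod]
          _ ≤ Nat.card (H : Set (alternatingGroup (Fin 4))) *
                Nat.card (K : Set (alternatingGroup (Fin 4))) := Set.natCard_mul_le
          _ ≤ 3 * 3 := Nat.mul_le_mul (hbound H hH) (hbound K hK)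
      omega
    · -- 5 ≤ n
      exact alt_not_solvable h5
        (ito_isSolvable H K (subgroup_comm_of_isCyclic H hH)
          (subgroup_comm_of_isCyclic K hK) hprod)
  rw [CF2]
  exact Nat.card_of_isEmpty
end

section
/- For the dihedral group D_{2n} of order 2n with n ≥ 3, the cyclic factorization number satisfies CF₂(D_{2n}) = 2n. -/
open Pointwise

namespace CF2DihedralAux

open DihedralGroup Subgroup

lemma zpowersIsCyclic {G : Type*} [Group G] (g : G) : IsCyclic (Subgroup.zpowers g) := by
  refine ⟨⟨⟨g, Subgroup.mem_zpowers g⟩, ?_⟩⟩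
  rintro ⟨x, hx⟩
  obtain ⟨k, rfl⟩ := hx
  exact ⟨k, by ext; simp⟩

variable {n : ℕ}

lemma r_inv (i : ZMod n) : (r i : DihedralGroup n)⁻¹ = r (-i) := rfl

theorem r_one_zpow (k : ℤ) : (r 1 : DihedralGroup n) ^ k = r (k : ZMod n) := by
  cases k with
  | ofNat m => simp [r_one_pow m]
  | negSucc m =>
      rw [zpow_negSucc, r_one_pow, r_inv, Int.cast_negSucc]

lemma mem_rot [NeZero n] {x : DihedralGroup n} :
    x ∈ zpowers (r (1 : ZMod n)) ↔ ∃ i, x = r i := by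
  constructor
  · rintro ⟨k, rfl⟩
    exact ⟨k, (r_one_zpow k).symm ▸ rfl⟩
  · rintro ⟨i, rfl⟩
    exact ⟨(i.val : ℤ), by simp [r_one_zpow, ZMod.natCast_val, ZMod.cast_id]⟩

lemma mem_zpowers_sr {i : ZMod n} {x : DihedralGroup n} :
    x ∈ zpowers (sr i) ↔ x = 1 ∨ x = sr i := by
  constructor
  · rintro ⟨k, rfl⟩
    show sr i ^ k = 1 ∨ sr i ^ k = sr i
    have h2 : orderOf (sr i : DihedralGroup n) = 2 := orderOf_sr i
    rw [← zpow_mod_orderOf, h2]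
    norm_num
    rcases Int.emod_two_eq_zero_or_one k with h | h <;> rw [h] <;> simp
  · rintro (rfl | rfl)
    · exact one_mem _
    · exact mem_zpowers _

lemma rot_mul_refl [NeZero n] (i : ZMod n) :
    (zpowers (r (1 : ZMod n)) : Set (DihedralGroup n)) * ((zpowers (sr i) : Subgroup (DihedralGroup n)) : Set (DihedralGroup n)) = Set.univ := by
  ext g
  simp only [Set.mem_univ, iff_true]
  cases g with
  | r j =>
      exact ⟨r j, mem_rot.mpr ⟨j, rfl⟩, 1, one_mem _, mul_one _⟩
  | sr j =>
      refine ⟨r (i - j), mem_rot.mpr ⟨i - j, rfl⟩, sr i, mem_zpowers _, ?_⟩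
      show r (i - j) * sr i = sr j; rw [r_mul_sr]; ring_nf

lemma refl_mul_rot [NeZero n] (i : ZMod n) :
    (zpowers (sr i) : Set (DihedralGroup n)) * ((zpowers (r (1 : ZMod n)) : Subgroup (DihedralGroup n)) : Set (DihedralGroup n)) = Set.univ := by
  ext g
  simp only [Set.mem_univ, iff_true]
  cases g with
  | r j =>
      exact ⟨1, one_mem _, r j, mem_rot.mpr ⟨j, rfl⟩, one_mul _⟩
  | sr j =>
      refine ⟨sr i, mem_zpowers _, r (j - i), mem_rot.mpr ⟨j - i, rfl⟩, ?_⟩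
      show sr i * r (j - i) = sr j; rw [sr_mul_r]; ring_nf

lemma cyclic_classify [NeZero n] (H : Subgroup (DihedralGroup n)) (h : IsCyclic H) :
    H ≤ zpowers (r (1 : ZMod n)) ∨ ∃ i, H = zpowers (sr i) := by
  obtain ⟨⟨g, hg⟩, hgen⟩ := h.exists_generator
  have hH : H = zpowers g := by
    apply le_antisymm
    · intro x hx
      obtain ⟨k, hk⟩ := hgen ⟨x, hx⟩
      exact ⟨k, congrArg Subtype.val hk⟩
    · exact (zpowers_le).mpr hg
  cases g with
  | r j => exact Or.inl (hH ▸ (zpowers_le).mpr (mem_rot.mpr ⟨j, rfl⟩))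
  | sr j => exact Or.inr ⟨j, hH⟩

theorem cf2_dihedral_aux (n : ℕ) (hn : 3 ≤ n) :
    Nat.card {p : Subgroup (DihedralGroup n) × Subgroup (DihedralGroup n) //
      IsCyclic p.1 ∧ IsCyclic p.2 ∧ (p.1 : Set (DihedralGroup n)) * (p.2 : Set (DihedralGroup n)) = Set.univ}
      = 2 * n := by
  haveI : NeZero n := ⟨by omega⟩
  set R : Subgroup (DihedralGroup n) := zpowers (r (1 : ZMod n)) with hR
  have hsr_not_R : ∀ i : ZMod n, sr i ∉ R := by
    intro i hi
    obtain ⟨j, hj⟩ := mem_rot.mp hi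
    simp at hj
  have R_ne : ∀ i : ZMod n, R ≠ zpowers (sr i) := fun i h =>
    hsr_not_R i (h ▸ mem_zpowers (sr i))
  have zp_sr_inj : ∀ i i' : ZMod n,
      zpowers (sr i : DihedralGroup n) = zpowers (sr i') → i = i' := by
    intro i i' h
    have h1 : (sr i : DihedralGroup n) ∈ zpowers (sr i') := h ▸ mem_zpowers (sr i)
    rcases mem_zpowers_sr.mp h1 with h2 | h2
    · rw [one_def] at h2; cases h2
    · simpa using h2
  let f : Bool × ZMod n → {p : Subgroup (DihedralGroup n) × Subgroup (DihedralGroup n) //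
      IsCyclic p.1 ∧ IsCyclic p.2 ∧
        (p.1 : Set (DihedralGroup n)) * (p.2 : Set (DihedralGroup n)) = Set.univ} :=
    fun x =>
      if x.1 then ⟨(zpowers (sr x.2), R),
        zpowersIsCyclic _,
        hR ▸ zpowersIsCyclic _, refl_mul_rot x.2⟩
      else ⟨(R, zpowers (sr x.2)),
        hR ▸ zpowersIsCyclic _,
        zpowersIsCyclic _,
        rot_mul_refl x.2⟩
  have hinj : Function.Injective f := by
    rintro ⟨(_|_), i⟩ ⟨(_|_), i'⟩ h <;>
      simp only [f, if_true, if_false, Bool.false_eq_true, Subtype.mk.injEq, Prod.mk.injEq] at h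
    · obtain rfl := zp_sr_inj i i' h.2; rfl
    · exact absurd h.1 (R_ne i')
    · exact absurd h.1 (Ne.symm (R_ne i))
    · obtain rfl := zp_sr_inj i i' h.1; rfl
  have hsurj : Function.Surjective f := by
    rintro ⟨⟨H, K⟩, hH, hK, hprod⟩
    simp only at hH hK hprod
    rcases cyclic_classify H hH with hHR | ⟨i, rfl⟩
    · rcases cyclic_classify K hK with hKR | ⟨i, rfl⟩
      · exfalso
        have : (sr 0 : DihedralGroup n) ∈ (H : Set (DihedralGroup n)) * K := by
          rw [hprod]; trivial
        obtain ⟨h, hh, k, hk, hmul⟩ := this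
        obtain ⟨a, rfl⟩ := mem_rot.mp (hHR hh)
        obtain ⟨b, rfl⟩ := mem_rot.mp (hKR hk)
        simp at hmul
      · -- H ≤ R, K = zpowers (sr i)
        have key : ∀ j : ZMod n, r j ∈ H := by
          intro j
          have : (r j : DihedralGroup n) ∈ (H : Set (DihedralGroup n)) * (zpowers (sr i) : Subgroup (DihedralGroup n)) := by
            rw [hprod]; trivial
          obtain ⟨h, hh, k, hk, hmul⟩ := this
          replace hmul : h * k = r j := hmul
          rcases mem_zpowers_sr.mp hk with rfl | rfl
          · rw [mul_one] at hmul; exact hmul ▸ hh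
          · exfalso
            obtain ⟨a, rfl⟩ := mem_rot.mp (hHR hh)
            simp at hmul
        have hHeq : H = R := le_antisymm hHR (zpowers_le.mpr (key 1))
        exact ⟨(false, i), Subtype.ext (by simp [f, hHeq])⟩
    · rcases cyclic_classify K hK with hKR | ⟨j, rfl⟩
      · -- H = zpowers (sr i), K ≤ R
        have key : ∀ j : ZMod n, r j ∈ K := by
          intro j
          have : (r j : DihedralGroup n) ∈ ((zpowers (sr i) : Subgroup (DihedralGroup n)) : Set (DihedralGroup n)) * K := by
            rw [hprod]; trivial
          obtain ⟨h, hh, k, hk, hmul⟩ := this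
          replace hmul : h * k = r j := hmul
          rcases mem_zpowers_sr.mp hh with rfl | rfl
          · rw [one_mul] at hmul; exact hmul ▸ hk
          · exfalso
            obtain ⟨a, rfl⟩ := mem_rot.mp (hKR hk)
            simp at hmul
        have hKeq : K = R := le_antisymm hKR (zpowers_le.mpr (key 1))
        exact ⟨(true, i), Subtype.ext (by simp [f, hKeq])⟩
      · -- both reflections
        exfalso
        have hex : ∃ a : ZMod n, a ∉ ({0, j - i} : Finset (ZMod n)) := by
          by_contra hc
          push_neg at hc
          have h1 : (Finset.univ : Finset (ZMod n)).card ≤ ({0, j - i} : Finset (ZMod n)).card :=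
            Finset.card_le_card fun a _ => hc a
          have h2 : ({0, j - i} : Finset (ZMod n)).card ≤ 2 :=
            (Finset.card_insert_le _ _).trans (by simp)
          rw [Finset.card_univ, ZMod.card] at h1
          omega
        obtain ⟨a, ha⟩ := hex
        simp only [Finset.mem_insert, Finset.mem_singleton, not_or] at ha
        have : (r a : DihedralGroup n) ∈
            ((zpowers (sr i) : Subgroup (DihedralGroup n)) : Set (DihedralGroup n)) *
            ((zpowers (sr j) : Subgroup (DihedralGroup n)) : Set (DihedralGroup n)) := by
          rw [hprod]; trivial
        obtain ⟨h, hh, k, hk, hmul⟩ := this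
        replace hmul : h * k = r a := hmul
        rcases mem_zpowers_sr.mp hh with rfl | rfl <;>
          rcases mem_zpowers_sr.mp hk with rfl | rfl
        · rw [mul_one, one_def] at hmul
          exact ha.1 (r.inj hmul.symm)
        · simp only [one_mul, mul_one] at hmul; cases hmul
        · simp only [one_mul, mul_one] at hmul; cases hmul
        · rw [sr_mul_sr] at hmul
          exact ha.2 (by simpa using hmul.symm)
  rw [← Nat.card_eq_of_bijective f ⟨hinj, hsurj⟩, Nat.card_prod]
  simp [Nat.card_eq_fintype_card, ZMod.card]

end CF2DihedralAux

theorem cf2_dihedral (n : ℕ) (hn : 3 ≤ n) : CF2 (DihedralGroup n) = 2 * n :=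
  CF2DihedralAux.cf2_dihedral_aux n hn
end

section
/- For n ≥ 4, the cyclic factorization number of the generalized quaternion group Q_{2^n} of order 2^n is CF₂(Q_{2^n}) = 2^{n-1}. -/
open Pointwise

section Aux

open QuaternionGroup Subgroup

variable {m : ℕ}

lemma isCyclic_zpowers {G : Type*} [Group G] (g : G) : IsCyclic (Subgroup.zpowers g) := by
  refine ⟨⟨g, Subgroup.mem_zpowers g⟩, ?_⟩
  rintro ⟨y, k, rfl⟩
  exact ⟨k, by ext; simp⟩

lemma a_one_zpow (z : ℤ) : (a 1 : QuaternionGroup m) ^ z = a (z : ZMod (2 * m)) := by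
  obtain ⟨k, rfl | rfl⟩ := z.eq_nat_or_neg
  · rw [zpow_natCast, a_one_pow]; norm_cast
  · rw [zpow_neg, zpow_natCast, a_one_pow]
    refine inv_eq_of_mul_eq_one_left ?_
    rw [a_mul_a, one_def]
    push_cast
    ring_nf

lemma mem_A_iff [NeZero m] (g : QuaternionGroup m) :
    g ∈ Subgroup.zpowers (a 1 : QuaternionGroup m) ↔ ∃ i, g = a i := by
  constructor
  · rintro ⟨z, rfl⟩
    exact ⟨z, by simp [a_one_zpow]⟩
  · rintro ⟨i, rfl⟩
    exact ⟨(i.val : ℤ), by show (a 1)^(i.val:ℤ) = a i; rw [a_one_zpow]; push_cast; simp [ZMod.natCast_val, ZMod.cast_id]⟩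

lemma m_add_m [NeZero m] : ((m : ZMod (2 * m)) + m) = 0 := by
  have h : ((2 * m : ℕ) : ZMod (2 * m)) = 0 := ZMod.natCast_self _
  push_cast at h
  linear_combination h

lemma xa_pow_three [NeZero m] (j : ZMod (2 * m)) :
    (xa j : QuaternionGroup m) ^ 3 = xa (j + (m : ZMod (2*m))) := by
  have h3 : (3 : ℕ) = 2 + 1 := rfl
  rw [h3, pow_succ, xa_sq, a_mul_xa]
  congr 1
  linear_combination -(m_add_m (m := m))

lemma mem_Q_iff [NeZero m] (j : ZMod (2 * m)) (g : QuaternionGroup m) :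
    g ∈ Subgroup.zpowers (xa j) ↔ g = 1 ∨ g = a m ∨ g = xa j ∨ g = xa (j + (m : ZMod (2*m))) := by
  constructor
  · intro hg
    rw [← mem_powers_iff_mem_zpowers] at hg
    obtain ⟨k, rfl⟩ := hg
    beta_reduce
    rw [← pow_mod_orderOf, orderOf_xa]
    have h4 : k % 4 < 4 := Nat.mod_lt _ (by norm_num)
    interval_cases h : k % 4
    · simp
    · simp
    · simp
    · simp [xa_pow_three]
  · rintro (rfl | rfl | rfl | rfl)
    · exact one_mem _
    · exact ⟨(2 : ℤ), by have := xa_sq (n := m) j; rw [← zpow_natCast] at this; exact_mod_cast this⟩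
    · exact Subgroup.mem_zpowers _
    · exact ⟨(3 : ℤ), by have := xa_pow_three (m := m) j; rw [← zpow_natCast] at this; exact_mod_cast this⟩

lemma cyclic_classify [NeZero m] (H : Subgroup (QuaternionGroup m)) (hH : IsCyclic H) :
    H ≤ Subgroup.zpowers (a 1) ∨ ∃ j, H = Subgroup.zpowers (xa j) := by
  obtain ⟨⟨g, hgH⟩, hgen⟩ := hH.exists_generator
  have hle : H ≤ Subgroup.zpowers g := by
    intro x hx
    obtain ⟨z, hz⟩ := hgen ⟨x, hx⟩
    exact ⟨z, by simpa using congrArg Subtype.val hz⟩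
  cases g with
  | a i =>
      left
      exact hle.trans (Subgroup.zpowers_le.mpr ((mem_A_iff _).2 ⟨i, rfl⟩))
  | xa j =>
      right
      exact ⟨j, le_antisymm hle (Subgroup.zpowers_le.mpr hgH)⟩

lemma A_mul_Q [NeZero m] (j : ZMod (2 * m)) :
    (Subgroup.zpowers (a 1 : QuaternionGroup m) : Set (QuaternionGroup m)) * (Subgroup.zpowers (xa j) : Set (QuaternionGroup m)) = Set.univ := by
  ext g
  simp only [Set.mem_univ, iff_true]
  cases g with
  | a i => exact ⟨a i, (mem_A_iff _).2 ⟨i, rfl⟩, 1, one_mem _, mul_one _⟩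
  | xa i =>
      refine ⟨a (j - i), (mem_A_iff _).2 ⟨_, rfl⟩, xa j, Subgroup.mem_zpowers _, ?_⟩
      show a (j - i) * xa j = xa i
      rw [a_mul_xa, sub_sub_cancel]

lemma Q_mul_A [NeZero m] (j : ZMod (2 * m)) :
    (Subgroup.zpowers (xa j : QuaternionGroup m) : Set (QuaternionGroup m)) * (Subgroup.zpowers (a 1 : QuaternionGroup m) : Set (QuaternionGroup m)) = Set.univ := by
  ext g
  simp only [Set.mem_univ, iff_true]
  cases g with
  | a i => exact ⟨1, one_mem _, a i, (mem_A_iff _).2 ⟨i, rfl⟩, one_mul _⟩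
  | xa i =>
      refine ⟨xa j, Subgroup.mem_zpowers _, a (i - j), (mem_A_iff _).2 ⟨_, rfl⟩, ?_⟩
      show xa j * a (i - j) = xa i
      rw [xa_mul_a, add_sub_cancel]

lemma Q_add_m [NeZero m] (j : ZMod (2 * m)) :
    Subgroup.zpowers (xa (j + (m : ZMod (2 * m))) : QuaternionGroup m)
      = Subgroup.zpowers (xa j) := by
  apply le_antisymm <;> rw [Subgroup.zpowers_le]
  · exact (mem_Q_iff _ _).2 (Or.inr (Or.inr (Or.inr rfl)))
  · refine (mem_Q_iff _ _).2 (Or.inr (Or.inr (Or.inr ?_)))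
    congr 1
    linear_combination -(m_add_m (m := m))

lemma Q_inj [NeZero m] {i j : ZMod (2 * m)}
    (h : Subgroup.zpowers (xa i : QuaternionGroup m) = Subgroup.zpowers (xa j)) :
    i = j ∨ i = j + (m : ZMod (2 * m)) := by
  have hi : (xa i : QuaternionGroup m) ∈ Subgroup.zpowers (xa j) := h ▸ Subgroup.mem_zpowers _
  rw [mem_Q_iff] at hi
  rcases hi with h1 | h1 | h1 | h1
  · rw [one_def] at h1; cases h1
  · simp at h1
  · exact Or.inl (QuaternionGroup.xa.inj h1)
  · exact Or.inr (QuaternionGroup.xa.inj h1)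

lemma a_one_mem {t : ℕ} (ht : m = 2 * t) [NeZero m] (H : Subgroup (QuaternionGroup m))
    (h : (a 1 : QuaternionGroup m) ∈ H ∨ (a (1 - (m : ZMod (2 * m))) : QuaternionGroup m) ∈ H) :
    (a 1 : QuaternionGroup m) ∈ H := by
  rcases h with h | h
  · exact h
  · have h2 : (a 2 : QuaternionGroup m) ∈ H := by
      have hh := mul_mem h h
      rw [a_mul_a] at hh
      have : (1 - (m : ZMod (2 * m))) + (1 - m) = 2 := by linear_combination -(m_add_m (m := m))
      rwa [this] at hh
    have hm' : (a (m : ZMod (2 * m)) : QuaternionGroup m) ∈ H := by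
      have hp := pow_mem h2 t
      have he : (a (2 : ZMod (2 * m)) : QuaternionGroup m) ^ t = a (m : ZMod (2 * m)) := by
        have h21 : (a (2 : ZMod (2 * m)) : QuaternionGroup m) = (a 1) ^ (2 : ℕ) := by
          rw [a_one_pow]; norm_num
        rw [h21, ← pow_mul, a_one_pow, ht]
        try push_cast
        try ring_nf
      rwa [he] at hp
    have := mul_mem h hm'
    rw [a_mul_a, sub_add_cancel] at this
    exact this

lemma A_ne_Q [NeZero m] (hm : 4 ≤ m) (j : ZMod (2 * m)) :
    Subgroup.zpowers (a 1 : QuaternionGroup m) ≠ Subgroup.zpowers (xa j) := by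
  intro h
  haveI : Fact (1 < 2 * m) := ⟨by omega⟩
  have h1 : (a 1 : QuaternionGroup m) ∈ Subgroup.zpowers (xa j) := h ▸ Subgroup.mem_zpowers _
  rw [mem_Q_iff] at h1
  rcases h1 with h1 | h1 | h1 | h1
  · rw [one_def] at h1
    have := QuaternionGroup.a.inj h1
    have hv := congrArg ZMod.val this
    rw [ZMod.val_one, ZMod.val_zero] at hv
    omega
  · have := QuaternionGroup.a.inj h1
    have hv := congrArg ZMod.val this
    rw [ZMod.val_one, ZMod.val_cast_of_lt (by omega)] at hv
    omega
  · simp at h1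
  · simp at h1

lemma pair_classify {t : ℕ} (ht : m = 2 * t) (hm : 4 ≤ m) [NeZero m]
    (H K : Subgroup (QuaternionGroup m)) (hH : IsCyclic H) (hK : IsCyclic K)
    (hprod : (H : Set (QuaternionGroup m)) * (K : Set (QuaternionGroup m)) = Set.univ) :
    ∃ j, (H = Subgroup.zpowers (a 1) ∧ K = Subgroup.zpowers (xa j)) ∨
      (H = Subgroup.zpowers (xa j) ∧ K = Subgroup.zpowers (a 1)) := by
  have hmem : ∀ g : QuaternionGroup m, ∃ h ∈ H, ∃ k ∈ K, h * k = g := by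
    intro g
    have : g ∈ (H : Set (QuaternionGroup m)) * (K : Set (QuaternionGroup m)) := by
      rw [hprod]; trivial
    exact this
  rcases cyclic_classify H hH with hHA | ⟨i, rfl⟩ <;>
    rcases cyclic_classify K hK with hKA | ⟨j, rfl⟩
  · -- both ≤ A : impossible
    exfalso
    obtain ⟨h, hh, k, hk, he⟩ := hmem (xa 0)
    obtain ⟨s, rfl⟩ := (mem_A_iff _).1 (hHA hh)
    obtain ⟨s', rfl⟩ := (mem_A_iff _).1 (hKA hk)
    rw [a_mul_a] at he
    simp at he
  · -- H ≤ A, K = Q j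
    refine ⟨j, Or.inl ⟨?_, rfl⟩⟩
    have h1 : (a 1 : QuaternionGroup m) ∈ H := by
      obtain ⟨h, hh, k, hk, he⟩ := hmem (a 1)
      obtain ⟨s, rfl⟩ := (mem_A_iff _).1 (hHA hh)
      rw [mem_Q_iff] at hk
      rcases hk with rfl | rfl | rfl | rfl
      · rw [mul_one] at he; rwa [he] at hh
      · rw [a_mul_a] at he
        have hs : s = 1 - (m : ZMod (2 * m)) := by
          have := QuaternionGroup.a.inj he
          linear_combination this
        rw [hs] at hh
        exact a_one_mem ht H (Or.inr hh)
      · rw [a_mul_xa] at he; simp at he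
      · rw [a_mul_xa] at he; simp at he
    exact le_antisymm hHA (Subgroup.zpowers_le.mpr h1)
  · -- H = Q i, K ≤ A
    refine ⟨i, Or.inr ⟨rfl, ?_⟩⟩
    have h1 : (a 1 : QuaternionGroup m) ∈ K := by
      obtain ⟨h, hh, k, hk, he⟩ := hmem (a 1)
      obtain ⟨s, rfl⟩ := (mem_A_iff _).1 (hKA hk)
      rw [mem_Q_iff] at hh
      rcases hh with rfl | rfl | rfl | rfl
      · rw [one_mul] at he; rwa [he] at hk
      · rw [a_mul_a] at he
        have hs : s = 1 - (m : ZMod (2 * m)) := by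
          have := QuaternionGroup.a.inj he
          linear_combination this
        rw [hs] at hk
        exact a_one_mem ht K (Or.inr hk)
      · rw [xa_mul_a] at he; simp at he
      · rw [xa_mul_a] at he; simp at he
    exact le_antisymm hKA (Subgroup.zpowers_le.mpr h1)
  · -- H = Q i, K = Q j : impossible
    exfalso
    have hcompl : (({0, (m : ZMod (2 * m)), j - i, j - i + m} : Finset (ZMod (2 * m)))ᶜ).Nonempty := by
      rw [← Finset.card_pos, Finset.card_compl]
      have hle : ({0, (m : ZMod (2 * m)), j - i, j - i + m} : Finset (ZMod (2 * m))).card ≤ 4 := by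
        refine le_trans (Finset.card_insert_le _ _) (Nat.succ_le_succ ?_)
        refine le_trans (Finset.card_insert_le _ _) (Nat.succ_le_succ ?_)
        refine le_trans (Finset.card_insert_le _ _) (Nat.succ_le_succ ?_)
        simp
      have hcard : Fintype.card (ZMod (2 * m)) = 2 * m := ZMod.card _
      omega
    obtain ⟨k, hk⟩ := hcompl
    simp only [Finset.mem_compl, Finset.mem_insert, Finset.mem_singleton, not_or] at hk
    obtain ⟨hk1, hk2, hk3, hk4⟩ := hk
    obtain ⟨h, hh, k', hk', he⟩ := hmem (a k)
    rw [mem_Q_iff] at hh hk'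
    rcases hh with rfl | rfl | rfl | rfl <;> rcases hk' with rfl | rfl | rfl | rfl <;>
      simp only [one_def, a_mul_a, a_mul_xa, xa_mul_a, xa_mul_xa] at he <;>
      first
        | (have hv := QuaternionGroup.a.inj he
           first
             | exact hk1 (by linear_combination -hv)
             | exact hk1 (by linear_combination (m_add_m (m := m)) - hv)
             | exact hk2 (by linear_combination -hv)
             | exact hk3 (by linear_combination -hv)
             | exact hk3 (by linear_combination (m_add_m (m := m)) - hv)
             | exact hk4 (by linear_combination -hv)
             | exact hk4 (by linear_combination (m_add_m (m := m)) - hv))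
        | simp at he

lemma val_lift [NeZero m] (u : ZMod m) : ((u.val : ZMod (2 * m))).val = u.val :=
  ZMod.val_cast_of_lt (lt_of_lt_of_le u.val_lt (by omega))

lemma Q_lift [NeZero m] (j : ZMod (2 * m)) :
    Subgroup.zpowers (xa (n := m) ((((j.val : ZMod m)).val : ℕ) : ZMod (2 * m)))
      = Subgroup.zpowers (xa j) := by
  have hv : ((j.val : ZMod m)).val = j.val % m := ZMod.val_natCast _ _
  by_cases hj : j.val < m
  · rw [hv, Nat.mod_eq_of_lt hj]
    congr 2
    simp [ZMod.natCast_val, ZMod.cast_id]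
  · have hlt : j.val < 2 * m := j.val_lt
    have h2 : j.val % m = j.val - m := by
      conv_lhs => rw [show j.val = (j.val - m) + m from by omega]
      rw [Nat.add_mod_right, Nat.mod_eq_of_lt (by omega)]
    rw [hv, h2]
    have hjj : j = (((j.val - m : ℕ) : ZMod (2 * m)) + (m : ZMod (2 * m))) := by
      have : (((j.val - m : ℕ) : ZMod (2 * m)) + (m : ZMod (2 * m)))
          = ((j.val - m + m : ℕ) : ZMod (2 * m)) := by push_cast; ring
      rw [this, show j.val - m + m = j.val from by omega]
      simp [ZMod.natCast_val, ZMod.cast_id]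
    conv_rhs => rw [hjj, Q_add_m]

lemma cf2_general (t : ℕ) (ht : m = 2 * t) (hm : 4 ≤ m) :
    CF2 (QuaternionGroup m) = 2 * m := by
  haveI : NeZero m := ⟨by omega⟩
  set S := {p : Subgroup (QuaternionGroup m) × Subgroup (QuaternionGroup m) //
    IsCyclic p.1 ∧ IsCyclic p.2 ∧ (p.1 : Set (QuaternionGroup m)) * (p.2 : Set (QuaternionGroup m))
      = Set.univ} with hS
  have key : Nat.card (Bool × ZMod m) = Nat.card S := by
    apply Nat.card_eq_of_bijective
      (f := fun bu => if bu.1 then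
          (⟨(Subgroup.zpowers (xa ((bu.2.val : ZMod (2 * m)))), Subgroup.zpowers (a 1)),
            _root_.isCyclic_zpowers _, _root_.isCyclic_zpowers _, Q_mul_A _⟩ : S)
        else ⟨(Subgroup.zpowers (a 1), Subgroup.zpowers (xa ((bu.2.val : ZMod (2 * m))))),
            _root_.isCyclic_zpowers _, _root_.isCyclic_zpowers _, A_mul_Q _⟩)
    constructor
    · rintro ⟨b, u⟩ ⟨b', u'⟩ hbu
      have huu : ∀ (h : (u.val : ZMod (2 * m)) = (u'.val : ZMod (2 * m))
          ∨ (u.val : ZMod (2 * m)) = (u'.val : ZMod (2 * m)) + (m : ZMod (2 * m))), u = u' := by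
        rintro (h | h)
        · have := congrArg ZMod.val h
          rw [val_lift, val_lift] at this
          exact ZMod.val_injective _ this
        · exfalso
          have hsum : ((u'.val : ZMod (2 * m)) + (m : ZMod (2 * m)))
              = ((u'.val + m : ℕ) : ZMod (2 * m)) := by push_cast; ring
          have := congrArg ZMod.val h
          rw [val_lift, hsum, ZMod.val_cast_of_lt (by have := u'.val_lt; omega)] at this
          have := u.val_lt
          omega
      cases b <;> cases b' <;> simp only [if_true, if_false, Bool.false_eq_true] at hbu <;>
        rw [Subtype.mk_eq_mk, Prod.mk.injEq] at hbu
      · exact Prod.ext rfl (huu (Q_inj hbu.2))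
      · exact absurd hbu.1 (A_ne_Q hm _)
      · exact absurd hbu.1.symm (A_ne_Q hm _)
      · exact Prod.ext rfl (huu (Q_inj hbu.1))
    · rintro ⟨⟨H, K⟩, hH, hK, hprod⟩
      obtain ⟨j, ⟨rfl, rfl⟩ | ⟨rfl, rfl⟩⟩ := pair_classify ht hm H K hH hK hprod
      · refine ⟨(false, (j.val : ZMod m)), ?_⟩
        apply Subtype.ext
        beta_reduce
        rw [if_neg (by simp)]
        exact congrArg (Prod.mk _) (Q_lift j)
      · refine ⟨(true, (j.val : ZMod m)), ?_⟩
        apply Subtype.ext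
        beta_reduce
        rw [if_pos rfl]
        exact congrArg (fun H => (H, Subgroup.zpowers (a 1))) (Q_lift j)
  have hrfl : CF2 (QuaternionGroup m) = Nat.card S := rfl
  rw [hrfl, ← key, Nat.card_prod, Nat.card_eq_fintype_card, Nat.card_eq_fintype_card,
    Fintype.card_bool, ZMod.card]

end Aux

theorem cf2_generalized_quaternion (n : ℕ) (hn : 4 ≤ n) :
    CF2 (QuaternionGroup (2 ^ (n - 2))) = 2 ^ (n - 1) := by
  have ht : (2 : ℕ) ^ (n - 2) = 2 * 2 ^ (n - 3) := by
    rw [show n - 2 = (n - 3) + 1 from by omega, pow_succ']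
  have hm : 4 ≤ 2 ^ (n - 2) := by
    calc (4 : ℕ) = 2 ^ 2 := by norm_num
    _ ≤ 2 ^ (n - 2) := Nat.pow_le_pow_right (by norm_num) (by omega)
  rw [cf2_general (2 ^ (n - 3)) ht hm, show n - 1 = (n - 2) + 1 from by omega, pow_succ']
end

section
/- For n ≥ 4, the cyclic factorization number of the modular 2-group M(2^n) of order 2^n is CF₂(M(2^n)) = 4n - 2. -/
open Pointwise

theorem cf2_modular_2_group (n : ℕ) (hn : 4 ≤ n)
    (G : Type*) [Group G] [Fintype G] (x y : G)
    (hx : x ^ (2 ^ (n - 1)) = 1) (hy : y ^ 2 = 1)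
    (hrel : y⁻¹ * x * y = x ^ (2 ^ (n - 2) + 1))
    (hgen : Subgroup.closure {x, y} = ⊤) (hcard : Nat.card G = 2 ^ n) :
    CF2 G = 4 * n - 2 := by
  obtain ⟨s, rfl⟩ : ∃ s, n = s + 4 := ⟨n - 4, by omega⟩
  rw [show s + 4 - 1 = s + 3 by omega] at hx
  rw [show s + 4 - 2 = s + 2 by omega] at hrel
  -- basic facts
  have hyy : y * y = 1 := by rw [← sq]; exact hy
  have hyinv : y⁻¹ = y := by
    rw [inv_eq_iff_mul_eq_one, hyy]
  have hxN : x ^ ((2:ℤ) ^ (s + 3)) = 1 := by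
    have : ((2 ^ (s+3) : ℕ) : ℤ) = (2:ℤ) ^ (s+3) := by push_cast; ring
    rw [← this, zpow_natCast, hx]
  -- congruence lemma
  have hcong : ∀ a b : ℤ, (2:ℤ) ^ (s+3) ∣ (a - b) → x ^ a = x ^ b := by
    rintro a b ⟨t, ht⟩
    have ha : a = b + 2 ^ (s+3) * t := by linarith
    rw [ha, zpow_add, zpow_mul, hxN, one_zpow, mul_one]
  -- conjugation
  have hconj : ∀ a : ℤ, y * x ^ a = x ^ (((2:ℤ)^(s+2) + 1) * a) * y := by
    intro a
    have h1 : y * x * y⁻¹ = x ^ ((2:ℤ)^(s+2) + 1) := by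
      rw [hyinv]
      rw [hyinv] at hrel
      rw [hrel]
      rw [show ((2:ℤ)^(s+2) + 1) = ((2^(s+2) + 1 : ℕ) : ℤ) by push_cast; ring, zpow_natCast]
    have h2 : (y * x * y⁻¹) ^ a = y * x ^ a * y⁻¹ := conj_zpow
    rw [h1, ← zpow_mul] at h2
    rw [mul_comm ((2:ℤ)^(s+2) + 1) a] at h2
    rw [mul_comm a ((2:ℤ)^(s+2) + 1)] at h2
    rw [h2, hyinv, mul_assoc, hyy, mul_one]
  -- normal form: every element is x^a or x^a * y
  have hnf : ∀ g : G, ∃ a : ℤ, g = x ^ a ∨ g = x ^ a * y := by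
    intro g
    let S : Subgroup G :=
      { carrier := {g | ∃ a : ℤ, g = x ^ a ∨ g = x ^ a * y}
        one_mem' := ⟨0, Or.inl (zpow_zero x).symm⟩
        mul_mem' := by
          rintro g h ⟨a, rfl | rfl⟩ ⟨b, rfl | rfl⟩
          · exact ⟨a + b, Or.inl (by rw [zpow_add])⟩
          · exact ⟨a + b, Or.inr (by rw [zpow_add, mul_assoc])⟩
          · refine ⟨a + ((2:ℤ)^(s+2) + 1) * b, Or.inr ?_⟩
            rw [mul_assoc, hconj b, zpow_add, ← mul_assoc, mul_assoc]
          · refine ⟨a + ((2:ℤ)^(s+2) + 1) * b, Or.inl ?_⟩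
            calc x ^ a * y * (x ^ b * y) = x ^ a * (y * x ^ b) * y := by group
            _ = x ^ a * (x ^ (((2:ℤ)^(s+2) + 1) * b) * y) * y := by rw [hconj b]
            _ = x ^ a * x ^ (((2:ℤ)^(s+2) + 1) * b) * (y * y) := by group
            _ = x ^ (a + ((2:ℤ)^(s+2) + 1) * b) := by rw [hyy, mul_one, zpow_add]
        inv_mem' := by
          rintro g ⟨a, rfl | rfl⟩
          · exact ⟨-a, Or.inl (by rw [zpow_neg])⟩
          · refine ⟨((2:ℤ)^(s+2) + 1) * (-a), Or.inr ?_⟩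
            rw [mul_inv_rev, hyinv, ← zpow_neg, hconj (-a)]
        }
    have hsub : Subgroup.closure ({x, y} : Set G) ≤ S := by
      rw [Subgroup.closure_le]
      rintro g (rfl | rfl)
      · exact ⟨1, Or.inl (zpow_one _).symm⟩
      · exact ⟨0, Or.inr (by rw [zpow_zero, one_mul])⟩
    exact hsub (hgen ▸ Subgroup.mem_top g)
  -- the counting bijection setup
  haveI : NeZero (2 ^ (s+3)) := ⟨by positivity⟩
  set f : ZMod (2 ^ (s+3)) × ZMod 2 → G := fun p => x ^ (p.1.val : ℤ) * y ^ (p.2.val) with hf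
  have hval : ∀ a : ℤ, x ^ (((a : ZMod (2 ^ (s+3))).val : ℕ) : ℤ) = x ^ a := by
    intro a
    apply hcong
    have h1 : (((a : ZMod (2 ^ (s+3))).val : ℕ) : ZMod (2 ^ (s+3))) = (a : ZMod (2 ^ (s+3))) :=
      ZMod.natCast_rightInverse _
    have h0 : (((((a : ZMod (2 ^ (s+3))).val : ℕ) : ℤ) - a : ℤ) : ZMod (2 ^ (s+3))) = 0 := by
      rw [Int.cast_sub, Int.cast_natCast, h1, sub_self]
    have := (ZMod.intCast_zmod_eq_zero_iff_dvd _ (2 ^ (s+3))).mp h0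
    rwa [show (((2:ℕ) ^ (s+3) : ℕ) : ℤ) = (2:ℤ)^(s+3) by push_cast; ring] at this
  have hfeval0 : ∀ a : ℤ, f ((a : ZMod (2 ^ (s+3))), 0) = x ^ a := by
    intro a
    show x ^ (((a : ZMod (2 ^ (s+3))).val : ℕ) : ℤ) * y ^ (0 : ZMod 2).val = x ^ a
    rw [ZMod.val_zero, pow_zero, mul_one, hval a]
  have hfeval1 : ∀ a : ℤ, f ((a : ZMod (2 ^ (s+3))), 1) = x ^ a * y := by
    intro a
    show x ^ (((a : ZMod (2 ^ (s+3))).val : ℕ) : ℤ) * y ^ (1 : ZMod 2).val = x ^ a * y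
    rw [ZMod.val_one, pow_one, hval a]
  have hfsurj : Function.Surjective f := by
    intro g
    obtain ⟨a, rfl | rfl⟩ := hnf g
    · exact ⟨((a : ZMod (2 ^ (s+3))), 0), hfeval0 a⟩
    · exact ⟨((a : ZMod (2 ^ (s+3))), 1), hfeval1 a⟩
  have hfinj : Function.Injective f := by
    have hc : Fintype.card (ZMod (2 ^ (s+3)) × ZMod 2) = Fintype.card G := by
      rw [Fintype.card_prod, ZMod.card, ZMod.card, ← Nat.card_eq_fintype_card, hcard]
      ring
    exact ((Fintype.bijective_iff_surjective_and_card f).mpr ⟨hfsurj, hc⟩).injective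
  have hu1 : ∀ a b : ℤ, x ^ a = x ^ b ↔ (2:ℤ) ^ (s+3) ∣ (a - b) := by
    intro a b
    constructor
    · intro h
      have : f ((a : ZMod (2 ^ (s+3))), 0) = f ((b : ZMod (2 ^ (s+3))), 0) := by
        rw [hfeval0, hfeval0, h]
      have h2 := congrArg Prod.fst (hfinj this)
      simp only at h2
      have h0 : ((a - b : ℤ) : ZMod (2 ^ (s+3))) = 0 := by push_cast [h2]; ring
      have := (ZMod.intCast_zmod_eq_zero_iff_dvd _ (2 ^ (s+3))).mp h0
      rwa [show (((2:ℕ) ^ (s+3) : ℕ) : ℤ) = (2:ℤ)^(s+3) by push_cast; ring] at this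
    · exact hcong a b
  have hu2 : ∀ a b : ℤ, x ^ a * y ≠ x ^ b := by
    intro a b h
    have : f ((a : ZMod (2 ^ (s+3))), 1) = f ((b : ZMod (2 ^ (s+3))), 0) := by
      rw [hfeval0, hfeval1]; exact h
    have h2 := congrArg Prod.snd (hfinj this)
    simp only at h2
    exact one_ne_zero h2
  -- squares of x^a * y
  have hsq : ∀ a : ℤ, (x ^ a * y) * (x ^ a * y) = x ^ (a * ((2:ℤ)^(s+2)+2)) := by
    intro a
    calc x ^ a * y * (x ^ a * y) = x ^ a * (y * x ^ a) * y := by group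
    _ = x ^ a * (x ^ (((2:ℤ)^(s+2)+1) * a) * y) * y := by rw [hconj]
    _ = x ^ a * x ^ (((2:ℤ)^(s+2)+1) * a) * (y * y) := by group
    _ = x ^ (a * ((2:ℤ)^(s+2)+2)) := by rw [hyy, mul_one, ← zpow_add]; congr 1; ring
  have hpow_even : ∀ a t : ℤ, (x ^ a * y) ^ (2*t) = x ^ (a*(((2:ℤ)^(s+2)+2)*t)) := by
    intro a t
    have h2 : (x ^ a * y) ^ (2:ℤ) = x ^ (a * ((2:ℤ)^(s+2)+2)) := by
      rw [zpow_two, hsq a]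
    rw [zpow_mul, h2, ← zpow_mul]
    congr 1; ring
  have hpow_odd : ∀ a t : ℤ, (x ^ a * y) ^ (2*t+1) = x ^ (a*(((2:ℤ)^(s+2)+2)*t+1)) * y := by
    intro a t
    rw [zpow_add, zpow_one, hpow_even, ← mul_assoc, ← zpow_add]
    congr 2
    ring
  have hmem_iff : ∀ a : ℤ, ∀ g : G, g ∈ Subgroup.zpowers (x ^ a * y) ↔
      ∃ t : ℤ, g = x ^ (a*(((2:ℤ)^(s+2)+2)*t)) ∨ g = x ^ (a*(((2:ℤ)^(s+2)+2)*t+1)) * y := by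
    intro a g
    rw [Subgroup.mem_zpowers_iff]
    constructor
    · rintro ⟨t', rfl⟩
      rcases Int.even_or_odd t' with ⟨t, rfl⟩ | ⟨t, rfl⟩
      · exact ⟨t, Or.inl (by rw [show t + t = 2*t by ring, hpow_even])⟩
      · exact ⟨t, Or.inr (by rw [hpow_odd])⟩
    · rintro ⟨t, rfl | rfl⟩
      · exact ⟨2*t, hpow_even a t⟩
      · exact ⟨2*t+1, hpow_odd a t⟩
  -- Bezout helper
  have hbez : ∀ b : ℤ, Odd b → ∀ m : ℕ, 1 ≤ m → ∃ u v : ℤ, Odd u ∧ u*b + v*2^m = 1 := by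
    intro b hb m hm
    have hndvd : ¬ (2:ℤ) ∣ b := by
      rcases hb with ⟨k, rfl⟩; omega
    have hcop : IsCoprime b ((2:ℤ)^m) :=
      (IsCoprime.pow_left ((Int.prime_two.coprime_iff_not_dvd).mpr hndvd)).symm
    obtain ⟨u, v, huv⟩ := hcop
    refine ⟨u, v, ?_, huv⟩
    rcases Int.even_or_odd u with ⟨w, rfl⟩ | ho
    · exfalso
      rcases hb with ⟨k, rfl⟩
      have hm2 : (2:ℤ)^m = 2*2^(m-1) := by
        rw [← pow_succ']
        congr 1; omega
      rw [hm2] at huv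
      have : (2:ℤ) ∣ 1 := ⟨(w+w)*k + w + v*2^(m-1), by linarith⟩
      norm_num at this
    · exact ho
  -- the distinguished cyclic subgroups
  set A : Subgroup G := Subgroup.zpowers x with hAdef
  set K : ℕ → Subgroup G := fun i => Subgroup.zpowers (x ^ ((2:ℤ)^i) * y) with hKdef
  have hKmem : ∀ (i : ℕ) (g : G), g ∈ K i ↔
      ∃ t : ℤ, g = x ^ (((2:ℤ)^i)*(((2:ℤ)^(s+2)+2)*t)) ∨
        g = x ^ (((2:ℤ)^i)*(((2:ℤ)^(s+2)+2)*t+1)) * y := fun i g => hmem_iff ((2:ℤ)^i) g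
  have hP1 : ∀ i : ℕ, i ≤ s+2 → ∀ b : ℤ, Odd b →
      Subgroup.zpowers (x ^ ((2:ℤ)^i * b) * y) = K i := by
    intro i hi b hb
    obtain ⟨w, rfl⟩ := hb
    apply le_antisymm
    · rw [Subgroup.zpowers_le]
      refine (hKmem i _).mpr ⟨w*(2^(s+1)+1), Or.inr ?_⟩
      have hxeq : x ^ ((2:ℤ)^i * (2*w+1)) =
          x ^ (((2:ℤ)^i)*(((2:ℤ)^(s+2)+2)*(w*(2^(s+1)+1))+1)) := by
        apply hcong
        exact ⟨-(2^i*(w*(2^s+1))), by ring⟩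
      rw [hxeq]
    · rw [Subgroup.zpowers_le]
      obtain ⟨u, v, hu, huv⟩ := hbez (2*w+1) ⟨w, rfl⟩ (s+3-i) (by omega)
      obtain ⟨w', rfl⟩ := hu
      refine (hmem_iff ((2:ℤ)^i * (2*w+1)) _).mpr ⟨w'*(2^(s+1)+1), Or.inr ?_⟩
      have hsplit : (2:ℤ)^(s+3) = 2^i * 2^(s+3-i) := by
        rw [← pow_add]; congr 1; omega
      have hxeq : x ^ ((2:ℤ)^i) =
          x ^ (((2:ℤ)^i * (2*w+1))*(((2:ℤ)^(s+2)+2)*(w'*(2^(s+1)+1))+1)) := by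
        apply hcong
        refine ⟨v - 2^i*((2*w+1)*(w'*(2^s+1))), ?_⟩
        first
        | linear_combination (-(2:ℤ)^i) * huv + v * hsplit
        | linear_combination (-(2:ℤ)^i) * huv - v * hsplit
        | linear_combination ((2:ℤ)^i) * huv + v * hsplit
        | linear_combination ((2:ℤ)^i) * huv - v * hsplit
      rw [hxeq]
  have hKtop : K (s+3) = Subgroup.zpowers y := by
    show Subgroup.zpowers (x ^ ((2:ℤ)^(s+3)) * y) = Subgroup.zpowers y
    rw [hxN, one_mul]
  -- reduction of an exponent mod 2^(s+3)
  have hdva : ∀ a : ℤ, x ^ a = x ^ (a % (2:ℤ)^(s+3)) := by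
    intro a
    apply hcong
    exact ⟨a / 2^(s+3), by linarith [Int.mul_ediv_add_emod a ((2:ℤ)^(s+3))]⟩
  -- classification of cyclic subgroups
  have hclassify : ∀ h : G, Subgroup.zpowers h = A ∨
      (∃ i, i ≤ s+3 ∧ Subgroup.zpowers h = K i) ∨
      Subgroup.zpowers h ≤ Subgroup.zpowers (x ^ (2:ℤ)) := by
    intro h
    obtain ⟨a, rfl | rfl⟩ := hnf h
    · rcases Int.even_or_odd a with ⟨c, rfl⟩ | ⟨w, rfl⟩
      · right; right
        rw [Subgroup.zpowers_le]
        exact Subgroup.mem_zpowers_iff.mpr ⟨c, by rw [← zpow_mul]; congr 1; ring⟩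
      · left
        apply le_antisymm
        · rw [Subgroup.zpowers_le]
          exact Subgroup.mem_zpowers_iff.mpr ⟨2*w+1, rfl⟩
        · rw [Subgroup.zpowers_le]
          obtain ⟨u, v, _, huv⟩ := hbez (2*w+1) ⟨w, rfl⟩ (s+3) (by omega)
          refine Subgroup.mem_zpowers_iff.mpr ⟨u, ?_⟩
          rw [← zpow_mul]
          conv_rhs => rw [← zpow_one x]
          apply hcong
          exact ⟨-v, by linarith⟩
    · by_cases hd0 : a % (2:ℤ)^(s+3) = 0
      · right; left
        refine ⟨s+3, by omega, ?_⟩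
        rw [show x ^ a * y = y by rw [hdva a, hd0, zpow_zero, one_mul], ← hKtop]
      · have hnn : 0 ≤ a % (2:ℤ)^(s+3) := Int.emod_nonneg a (by positivity)
        have hlt : a % (2:ℤ)^(s+3) < 2^(s+3) := Int.emod_lt_of_pos a (by positivity)
        set d : ℕ := (a % (2:ℤ)^(s+3)).toNat with hddef
        have hd : (d : ℤ) = a % (2:ℤ)^(s+3) := Int.toNat_of_nonneg hnn
        have hdne : d ≠ 0 := by
          intro h0
          rw [h0] at hd
          exact hd0 (by exact_mod_cast hd.symm)
        obtain ⟨i, c, hcnd, hdc⟩ := Nat.exists_eq_pow_mul_and_not_dvd hdne 2 (by norm_num)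
        have hcpos : 0 < c := by
          rcases Nat.eq_zero_or_pos c with h0 | h; · exfalso; omega
          exact h
        have hdltn : d < 2^(s+3) := by
          have : ((d:ℤ)) < 2^(s+3) := hd ▸ hlt
          exact_mod_cast this
        have hile : i ≤ s+2 := by
          have h1 : 2^i ≤ d := by
            rw [hdc]; exact Nat.le_mul_of_pos_right _ hcpos
          have h2 : (2:ℕ)^i < 2^(s+3) := lt_of_le_of_lt h1 hdltn
          have := (Nat.pow_lt_pow_iff_right (a := 2) (by norm_num)).mp h2
          omega
        have hoddc : Odd (c:ℤ) := by
          have : c % 2 = 1 := Nat.not_even_iff.mp (fun he => hcnd he.two_dvd)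
          exact ⟨(c/2 : ℕ), by omega⟩
        have hxa : x ^ a = x ^ ((2:ℤ)^i * (c:ℤ)) := by
          rw [hdva a, ← hd]
          congr 1
          push_cast [hdc]
          ring
        right; left
        exact ⟨i, by omega, by rw [hxa]; exact hP1 i hile (c:ℤ) hoddc⟩
  -- multiplication helpers
  have hmul_xy : ∀ a b : ℤ, (x ^ a) * (x ^ b * y) = x ^ (a+b) * y := by
    intro a b; rw [← mul_assoc, ← zpow_add]
  have hmul_yx : ∀ a b : ℤ, (x ^ a * y) * (x ^ b) = x ^ (a + ((2:ℤ)^(s+2)+1)*b) * y := by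
    intro a b
    rw [mul_assoc, hconj b, ← mul_assoc, ← zpow_add]
  have hmul_yy : ∀ a b : ℤ, (x ^ a * y) * (x ^ b * y) = x ^ (a + ((2:ℤ)^(s+2)+1)*b) := by
    intro a b
    calc (x ^ a * y) * (x ^ b * y) = ((x ^ a * y) * x ^ b) * y := by group
    _ = (x ^ (a + ((2:ℤ)^(s+2)+1)*b) * y) * y := by rw [hmul_yx]
    _ = x ^ (a + ((2:ℤ)^(s+2)+1)*b) * (y * y) := by group
    _ = _ := by rw [hyy, mul_one]
  -- membership facts
  have hxA : ∀ a : ℤ, x ^ a ∈ A := fun a => Subgroup.mem_zpowers_iff.mpr ⟨a, rfl⟩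
  have hx2B : ∀ c : ℤ, x ^ (2*c) ∈ K 0 := by
    intro c
    refine (hKmem 0 _).mpr ⟨c*(2^(s+1)+1), Or.inl ?_⟩
    apply hcong
    exact ⟨-(c*(2^s+1)), by ring⟩
  have hoddB : ∀ a : ℤ, Odd a → x ^ a * y ∈ K 0 := by
    intro a ha
    have h := hP1 0 (by omega) a ha
    rw [← h, show (2:ℤ)^(0:ℕ) * a = a by norm_num]
    exact Subgroup.mem_zpowers _
  -- negative membership facts
  have hynA : y ∉ A := by
    intro hy'
    obtain ⟨t, ht⟩ := Subgroup.mem_zpowers_iff.mp hy'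
    exact hu2 0 t (by rw [zpow_zero, one_mul]; exact ht.symm)
  -- parity helper
  have hpar : ∀ e : ℤ, x ^ (2*e) = x → False := by
    intro e he
    have hd := (hu1 (2*e) 1).mp (by rw [zpow_one]; exact he)
    obtain ⟨T, hT⟩ := dvd_trans (⟨(2:ℤ)^(s+2), by ring⟩ : (2:ℤ) ∣ (2:ℤ)^(s+3)) hd
    have h2 : (2:ℤ) ∣ 1 := ⟨e - T, by linarith⟩
    norm_num at h2
  -- extraction from a product covering
  have hget : ∀ (H L : Subgroup G), (↑H * ↑L : Set G) = Set.univ →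
      ∀ g : G, ∃ h ∈ H, ∃ k ∈ L, h * k = g := by
    intro H L hHL g
    have hg : g ∈ (↑H * ↑L : Set G) := by rw [hHL]; trivial
    obtain ⟨h, hh, k, hk, hmul⟩ := hg
    exact ⟨h, hh, k, hk, hmul⟩
  -- impossible factorizations
  have hnotA : ∀ (H L : Subgroup G), H ≤ A → L ≤ A → (↑H * ↑L : Set G) ≠ Set.univ := by
    intro H L hHA hLA huniv
    obtain ⟨h, hh, k, hk, hmul⟩ := hget H L huniv y
    obtain ⟨t1, ht1⟩ := Subgroup.mem_zpowers_iff.mp (hHA hh)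
    obtain ⟨t2, ht2⟩ := Subgroup.mem_zpowers_iff.mp (hLA hk)
    apply hu2 0 (t1 + t2)
    rw [zpow_zero, one_mul, zpow_add, ht1, ht2, hmul]
  have hnotEven : ∀ (H L : Subgroup G),
      (∀ g ∈ H, ∃ c : ℤ, g = x ^ (2*c) ∨ g = x ^ (2*c) * y) →
      (∀ g ∈ L, ∃ c : ℤ, g = x ^ (2*c) ∨ g = x ^ (2*c) * y) →
      (↑H * ↑L : Set G) ≠ Set.univ := by
    intro H L hH hL huniv
    obtain ⟨h, hh, k, hk, hmul⟩ := hget H L huniv x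
    obtain ⟨c, rfl | rfl⟩ := hH h hh <;> obtain ⟨d, rfl | rfl⟩ := hL k hk
    · rw [← zpow_add, show 2*c+2*d = 2*(c+d) by ring] at hmul
      exact hpar _ hmul
    · rw [hmul_xy] at hmul
      exact hu2 _ 1 (hmul.trans (zpow_one x).symm)
    · rw [hmul_yx] at hmul
      exact hu2 _ 1 (hmul.trans (zpow_one x).symm)
    · rw [hmul_yy, show 2*c + ((2:ℤ)^(s+2)+1)*(2*d) = 2*(c + ((2:ℤ)^(s+2)+1)*d) by ring] at hmul
      exact hpar _ hmul
  have hnotB : ∀ (H L : Subgroup G), H ≤ K 0 → L ≤ K 0 → (↑H * ↑L : Set G) ≠ Set.univ := by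
    intro H L hHB hLB huniv
    obtain ⟨h, hh, k, hk, hmul⟩ := hget H L huniv x
    obtain ⟨t1, rfl | rfl⟩ := (hKmem 0 h).mp (hHB hh) <;>
      obtain ⟨t2, rfl | rfl⟩ := (hKmem 0 k).mp (hLB hk)
    · rw [← zpow_add, show (2:ℤ)^(0:ℕ)*((2^(s+2)+2)*t1) + (2:ℤ)^(0:ℕ)*((2^(s+2)+2)*t2)
        = 2*((2^(s+1)+1)*(t1+t2)) by ring] at hmul
      exact hpar _ hmul
    · rw [hmul_xy] at hmul
      exact hu2 _ 1 (hmul.trans (zpow_one x).symm)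
    · rw [hmul_yx] at hmul
      exact hu2 _ 1 (hmul.trans (zpow_one x).symm)
    · rw [hmul_yy, show (2:ℤ)^(0:ℕ)*((2^(s+2)+2)*t1+1) +
        ((2:ℤ)^(s+2)+1)*((2:ℤ)^(0:ℕ)*((2^(s+2)+2)*t2+1))
        = 2*((2^(s+1)+1)*t1 + ((2^(s+2)+1)*(2^(s+1)+1))*t2 + 2^(s+1) + 1) by ring] at hmul
      exact hpar _ hmul
  -- even classification of K i for i ≥ 1 and of zpowers x^2
  have hKeven : ∀ i : ℕ, 1 ≤ i → ∀ g ∈ K i, ∃ c : ℤ, g = x ^ (2*c) ∨ g = x ^ (2*c) * y := by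
    intro i hi g hg
    obtain ⟨i', rfl⟩ : ∃ i', i = i' + 1 := ⟨i - 1, by omega⟩
    obtain ⟨t, rfl | rfl⟩ := (hKmem _ g).mp hg
    · refine ⟨2^i'*((2^(s+2)+2)*t), Or.inl ?_⟩
      rw [show (2:ℤ)^(i'+1)*((2^(s+2)+2)*t) = 2*(2^i'*((2^(s+2)+2)*t)) by ring]
    · refine ⟨2^i'*((2^(s+2)+2)*t+1), Or.inr ?_⟩
      rw [show (2:ℤ)^(i'+1)*((2^(s+2)+2)*t+1) = 2*(2^i'*((2^(s+2)+2)*t+1)) by ring]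
  have hCeven : ∀ g ∈ Subgroup.zpowers (x ^ (2:ℤ)), ∃ c : ℤ, g = x ^ (2*c) := by
    intro g hg
    obtain ⟨t, ht⟩ := Subgroup.mem_zpowers_iff.mp hg
    exact ⟨t, by rw [← ht, ← zpow_mul]⟩
  have hC_le_A : Subgroup.zpowers (x ^ (2:ℤ)) ≤ A := Subgroup.zpowers_le.mpr (hxA 2)
  have hC_le_B : Subgroup.zpowers (x ^ (2:ℤ)) ≤ K 0 := by
    rw [Subgroup.zpowers_le]
    have := hx2B 1
    rwa [show (2*1:ℤ) = 2 by norm_num] at this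
  -- positive product lemmas
  have hprodAK : ∀ i : ℕ, ((A : Set G) * (K i : Set G)) = Set.univ := by
    intro i
    rw [Set.eq_univ_iff_forall]
    intro g
    obtain ⟨a, rfl | rfl⟩ := hnf g
    · have h1 := Set.mul_mem_mul (hxA a) ((K i).one_mem)
      rwa [mul_one] at h1
    · have h1 := Set.mul_mem_mul (hxA (a - (2:ℤ)^i)) (Subgroup.mem_zpowers (x ^ ((2:ℤ)^i) * y))
      rwa [hmul_xy, sub_add_cancel] at h1
  have hprodKA : ∀ i : ℕ, ((K i : Set G) * (A : Set G)) = Set.univ := by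
    intro i
    rw [Set.eq_univ_iff_forall]
    intro g
    obtain ⟨a, rfl | rfl⟩ := hnf g
    · have h1 := Set.mul_mem_mul ((K i).one_mem) (hxA a)
      rwa [one_mul] at h1
    · have h1 := Set.mul_mem_mul (Subgroup.mem_zpowers (x ^ ((2:ℤ)^i) * y))
        (hxA (((2:ℤ)^(s+2)+1)*(a - (2:ℤ)^i)))
      rw [hmul_yx] at h1
      have h2 : x ^ ((2:ℤ)^i + ((2:ℤ)^(s+2)+1)*(((2:ℤ)^(s+2)+1)*(a - (2:ℤ)^i))) = x ^ a := by
        apply hcong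
        exact ⟨(2^(s+1)+1)*(a - 2^i), by ring⟩
      rwa [h2] at h1
  have hprodBK : ∀ i : ℕ, 1 ≤ i → ((K 0 : Set G) * (K i : Set G)) = Set.univ := by
    intro i hi
    obtain ⟨i', rfl⟩ : ∃ i', i = i' + 1 := ⟨i - 1, by omega⟩
    rw [Set.eq_univ_iff_forall]
    intro g
    obtain ⟨a, rfl | rfl⟩ := hnf g
    · rcases Int.even_or_odd a with ⟨c, rfl⟩ | ⟨w, rfl⟩
      · have h1 := Set.mul_mem_mul (hx2B c) ((K (i'+1)).one_mem)
        rwa [mul_one, two_mul] at h1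
      · have hodd : Odd (2*w+1 - ((2:ℤ)^(s+2)+1)*2^(i'+1)) :=
          ⟨w - ((2:ℤ)^(s+2)+1)*2^i', by ring⟩
        have h1 := Set.mul_mem_mul (hoddB _ hodd) (Subgroup.mem_zpowers (x ^ ((2:ℤ)^(i'+1)) * y))
        rwa [hmul_yy, show (2*w+1 - ((2:ℤ)^(s+2)+1)*2^(i'+1)) + ((2:ℤ)^(s+2)+1)*(2:ℤ)^(i'+1)
          = 2*w+1 by ring] at h1
    · rcases Int.even_or_odd a with ⟨c, rfl⟩ | hodd
      · have h1 := Set.mul_mem_mul (hx2B (c - 2^i')) (Subgroup.mem_zpowers (x ^ ((2:ℤ)^(i'+1)) * y))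
        rwa [hmul_xy, show 2*(c - 2^i') + (2:ℤ)^(i'+1) = c + c by ring] at h1
      · have h1 := Set.mul_mem_mul (hoddB a hodd) ((K (i'+1)).one_mem)
        rwa [mul_one] at h1
  have hprodKB : ∀ i : ℕ, 1 ≤ i → ((K i : Set G) * (K 0 : Set G)) = Set.univ := by
    intro i hi
    obtain ⟨i', rfl⟩ : ∃ i', i = i' + 1 := ⟨i - 1, by omega⟩
    rw [Set.eq_univ_iff_forall]
    intro g
    obtain ⟨a, rfl | rfl⟩ := hnf g
    · rcases Int.even_or_odd a with ⟨c, rfl⟩ | ⟨w, rfl⟩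
      · have h1 := Set.mul_mem_mul ((K (i'+1)).one_mem) (hx2B c)
        rwa [one_mul, two_mul] at h1
      · have hodd : Odd (((2:ℤ)^(s+2)+1)*(2*w+1 - 2^(i'+1))) :=
          ⟨((2:ℤ)^(s+2)+1)*(w - 2^i') + 2^(s+1), by ring⟩
        have h1 := Set.mul_mem_mul (Subgroup.mem_zpowers (x ^ ((2:ℤ)^(i'+1)) * y))
          (hoddB _ hodd)
        rw [hmul_yy] at h1
        have h2 : x ^ ((2:ℤ)^(i'+1) + ((2:ℤ)^(s+2)+1)*(((2:ℤ)^(s+2)+1)*(2*w+1 - 2^(i'+1))))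
            = x ^ (2*w+1) := by
          apply hcong
          exact ⟨(2^(s+1)+1)*(2*w+1 - 2^(i'+1)), by ring⟩
        rwa [h2] at h1
    · rcases Int.even_or_odd a with ⟨c, rfl⟩ | ⟨w, rfl⟩
      · have h1 := Set.mul_mem_mul (Subgroup.mem_zpowers (x ^ ((2:ℤ)^(i'+1)) * y))
          (hx2B (((2:ℤ)^(s+2)+1)*(c - 2^i')))
        rw [hmul_yx] at h1
        have h2 : x ^ ((2:ℤ)^(i'+1) + ((2:ℤ)^(s+2)+1)*(2*(((2:ℤ)^(s+2)+1)*(c - 2^i'))))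
            = x ^ (c + c) := by
          apply hcong
          exact ⟨(2^(s+1)+1)*(2*c - 2^(i'+1)), by ring⟩
        rwa [h2] at h1
      · have hmemKi : x ^ ((2:ℤ)^(i'+1)*(((2:ℤ)^(s+2)+2)*1)) ∈ K (i'+1) :=
          (hKmem (i'+1) _).mpr ⟨1, Or.inl rfl⟩
        have hodd : Odd (2*w+1 - (2:ℤ)^(i'+1)*(((2:ℤ)^(s+2)+2)*1)) :=
          ⟨w - 2^i'*(2^(s+2)+2), by ring⟩
        have h1 := Set.mul_mem_mul hmemKi (hoddB _ hodd)
        rwa [hmul_xy, show (2:ℤ)^(i'+1)*(((2:ℤ)^(s+2)+2)*1) +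
          (2*w+1 - (2:ℤ)^(i'+1)*(((2:ℤ)^(s+2)+2)*1)) = 2*w+1 by ring] at h1
  -- distinctness
  have hAneK : ∀ i : ℕ, A ≠ K i := by
    intro i h
    have hmem : x ^ ((2:ℤ)^i) * y ∈ A := h ▸ Subgroup.mem_zpowers _
    obtain ⟨t, ht⟩ := Subgroup.mem_zpowers_iff.mp hmem
    exact hu2 ((2:ℤ)^i) t ht.symm
  have hKneK : ∀ i j : ℕ, i < j → j ≤ s+3 → K i ≠ K j := by
    intro i j hij hj h
    have hmem : x ^ ((2:ℤ)^i) * y ∈ K j := h ▸ Subgroup.mem_zpowers _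
    obtain ⟨t, ht | ht⟩ := (hKmem j _).mp hmem
    · exact hu2 _ _ ht
    · have hxe : x ^ ((2:ℤ)^i) = x ^ ((2:ℤ)^j*(((2:ℤ)^(s+2)+2)*t+1)) := mul_right_cancel ht
      have hd := (hu1 _ _).mp hxe
      have h1 : (2:ℤ)^(i+1) ∣ (2:ℤ)^i - (2:ℤ)^j*(((2:ℤ)^(s+2)+2)*t+1) :=
        dvd_trans (pow_dvd_pow 2 (by omega)) hd
      have h2 : (2:ℤ)^(i+1) ∣ (2:ℤ)^j*(((2:ℤ)^(s+2)+2)*t+1) :=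
        dvd_mul_of_dvd_left (pow_dvd_pow 2 (by omega)) _
      have h3 : (2:ℤ)^(i+1) ∣ (2:ℤ)^i := by
        have hadd := dvd_add h1 h2
        rwa [sub_add_cancel] at hadd
      have h4 := Int.le_of_dvd (by positivity) h3
      have h5 : (2:ℤ)^(i+1) = 2*2^i := by ring
      have h6 : (0:ℤ) < 2^i := by positivity
      linarith
  have hKinj : ∀ i j : ℕ, i ≤ s+3 → j ≤ s+3 → K i = K j → i = j := by
    intro i j hi hj h
    rcases lt_trichotomy i j with hlt | heq | hgt
    · exact absurd h (hKneK i j hlt hj)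
    · exact heq
    · exact absurd h.symm (hKneK j i hgt hi)
  -- cyclicity
  have hcyc : ∀ g : G, IsCyclic (Subgroup.zpowers g) := by
    intro g
    refine ⟨⟨⟨g, Subgroup.mem_zpowers g⟩, ?_⟩⟩
    rintro ⟨h, hh⟩
    obtain ⟨t, ht⟩ := Subgroup.mem_zpowers_iff.mp hh
    refine Subgroup.mem_zpowers_iff.mpr ⟨t, ?_⟩
    exact Subtype.ext (by rw [SubgroupClass.coe_zpow]; exact ht)
  have hcycA : IsCyclic A := hcyc x
  have hcycK : ∀ i : ℕ, IsCyclic (K i) := fun i => hcyc _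
  have hgenOf : ∀ H : Subgroup G, IsCyclic H → ∃ g : G, H = Subgroup.zpowers g := by
    intro H hH
    obtain ⟨⟨g, hgH⟩, hg⟩ := hH.exists_generator
    refine ⟨g, le_antisymm ?_ (Subgroup.zpowers_le.mpr hgH)⟩
    intro z hz
    obtain ⟨t, ht⟩ := Subgroup.mem_zpowers_iff.mp (hg ⟨z, hz⟩)
    refine Subgroup.mem_zpowers_iff.mpr ⟨t, ?_⟩
    have hval2 := congrArg (Subtype.val) ht
    rw [SubgroupClass.coe_zpow] at hval2
    exact hval2
  -- the enumeration
  have hb1 : ∀ i : Fin (s+4), (i:ℕ) ≤ s+3 := fun i => by have := i.isLt; omega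
  have hb2 : ∀ i : Fin (s+3), (i:ℕ)+1 ≤ s+3 := fun i => by have := i.isLt; omega
  let SP := {p : Subgroup G × Subgroup G //
    IsCyclic p.1 ∧ IsCyclic p.2 ∧ (p.1 : Set G) * (p.2 : Set G) = Set.univ}
  let F : ((Fin (s+4) ⊕ Fin (s+4)) ⊕ (Fin (s+3) ⊕ Fin (s+3))) → SP :=
    Sum.elim
      (Sum.elim (fun i => ⟨(A, K i), hcycA, hcycK _, hprodAK _⟩)
                (fun i => ⟨(K i, A), hcycK _, hcycA, hprodKA _⟩))
      (Sum.elim (fun i => ⟨(K 0, K ((i:ℕ)+1)), hcycK _, hcycK _, hprodBK ((i:ℕ)+1) (by omega)⟩)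
                (fun i => ⟨(K ((i:ℕ)+1), K 0), hcycK _, hcycK _, hprodKB ((i:ℕ)+1) (by omega)⟩))
  have hFinj : Function.Injective F := by
    rintro ((i|i)|(i|i)) ((j|j)|(j|j)) h <;>
      have h1 := congrArg (fun w => w.val.1) h <;>
      have h2 := congrArg (fun w => w.val.2) h <;>
      simp only [F, Sum.elim_inl, Sum.elim_inr] at h1 h2
    · rw [Fin.ext (hKinj _ _ (hb1 i) (hb1 j) h2)]
    · exact absurd h1 (hAneK _)
    · exact absurd h1 (hAneK 0)
    · exact absurd h1 (hAneK _)
    · exact absurd h1.symm (hAneK _)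
    · rw [Fin.ext (hKinj _ _ (hb1 i) (hb1 j) h1)]
    · exact absurd h2 (hAneK _)
    · exact absurd h2 (hAneK 0)
    · exact absurd h1.symm (hAneK 0)
    · exact absurd h2.symm (hAneK _)
    · have : ((i:ℕ)+1) = ((j:ℕ)+1) := hKinj _ _ (hb2 i) (hb2 j) h2
      rw [Fin.ext (by omega : (i:ℕ) = (j:ℕ))]
    · exact absurd h1 (hKneK 0 ((j:ℕ)+1) (by omega) (hb2 j))
    · exact absurd h1.symm (hAneK _)
    · exact absurd h2.symm (hAneK 0)
    · exact absurd h1.symm (hKneK 0 ((i:ℕ)+1) (by omega) (hb2 i))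
    · have : ((i:ℕ)+1) = ((j:ℕ)+1) := hKinj _ _ (hb2 i) (hb2 j) h1
      rw [Fin.ext (by omega : (i:ℕ) = (j:ℕ))]
  have hFsurj : Function.Surjective F := by
    rintro ⟨⟨H, L⟩, hc1, hc2, hprod⟩
    obtain ⟨gH, rfl⟩ := hgenOf H hc1
    obtain ⟨gL, rfl⟩ := hgenOf L hc2
    have hprod' : ((Subgroup.zpowers gH : Set G) * (Subgroup.zpowers gL : Set G)) = Set.univ :=
      hprod
    rcases hclassify gH with hH | ⟨i, hi, hH⟩ | hH
    · rcases hclassify gL with hL | ⟨j, hj, hL⟩ | hL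
      · exact absurd hprod' (hnotA _ _ (le_of_eq hH) (le_of_eq hL))
      · refine ⟨Sum.inl (Sum.inl ⟨j, by omega⟩), ?_⟩
        apply Subtype.ext
        show (A, K j) = (_, _)
        rw [hH, hL]
      · exact absurd hprod' (hnotA _ _ (le_of_eq hH) (le_trans hL hC_le_A))
    · rcases hclassify gL with hL | ⟨j, hj, hL⟩ | hL
      · refine ⟨Sum.inl (Sum.inr ⟨i, by omega⟩), ?_⟩
        apply Subtype.ext
        show (K i, A) = (_, _)
        rw [hH, hL]
      · by_cases hi0 : i = 0
        · subst hi0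
          by_cases hj0 : j = 0
          · subst hj0
            exact absurd hprod' (hnotB _ _ (le_of_eq hH) (le_of_eq hL))
          · refine ⟨Sum.inr (Sum.inl ⟨j-1, by omega⟩), ?_⟩
            apply Subtype.ext
            show (K 0, K ((j-1)+1)) = (_, _)
            rw [show (j-1)+1 = j by omega, hH, hL]
        · by_cases hj0 : j = 0
          · subst hj0
            refine ⟨Sum.inr (Sum.inr ⟨i-1, by omega⟩), ?_⟩
            apply Subtype.ext
            show (K ((i-1)+1), K 0) = (_, _)
            rw [show (i-1)+1 = i by omega, hH, hL]
          · refine absurd hprod' (hnotEven _ _ ?_ ?_)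
            · exact fun g hg => hKeven i (by omega) g (hH ▸ hg)
            · exact fun g hg => hKeven j (by omega) g (hL ▸ hg)
      · by_cases hi0 : i = 0
        · subst hi0
          exact absurd hprod' (hnotB _ _ (le_of_eq hH) (le_trans hL hC_le_B))
        · refine absurd hprod' (hnotEven _ _ ?_ ?_)
          · exact fun g hg => hKeven i (by omega) g (hH ▸ hg)
          · intro g hg
            obtain ⟨c, hc⟩ := hCeven g (hL hg)
            exact ⟨c, Or.inl hc⟩
    · rcases hclassify gL with hL | ⟨j, hj, hL⟩ | hL
      · exact absurd hprod' (hnotA _ _ (le_trans hH hC_le_A) (le_of_eq hL))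
      · by_cases hj0 : j = 0
        · subst hj0
          exact absurd hprod' (hnotB _ _ (le_trans hH hC_le_B) (le_of_eq hL))
        · refine absurd hprod' (hnotEven _ _ ?_ ?_)
          · intro g hg
            obtain ⟨c, hc⟩ := hCeven g (hH hg)
            exact ⟨c, Or.inl hc⟩
          · exact fun g hg => hKeven j (by omega) g (hL ▸ hg)
      · exact absurd hprod' (hnotA _ _ (le_trans hH hC_le_A) (le_trans hL hC_le_A))
  have hcount := Nat.card_eq_of_bijective F ⟨hFinj, hFsurj⟩
  have hCF : CF2 G = Nat.card SP := rfl
  rw [hCF, ← hcount]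
  simp only [Nat.card_eq_fintype_card, Fintype.card_sum, Fintype.card_fin]
  omega
end

section
/- For m ≥ 2, the group ℤ₂ × Q_{2^{m+1}} (direct product of the cyclic group of order 2 with the generalized quaternion group of order 2^{m+1}) cannot be written as a product of two cyclic subgroups; i.e. CF₂(ℤ₂ × Q_{2^{m+1}}) = 0. -/
open Pointwise Multiplicative

/-- The "abelianization-like" map from the quaternion group to `ℤ₂ × ℤ₂`. -/
def qf {n : ℕ} : QuaternionGroup n → Multiplicative (ZMod 2) × Multiplicative (ZMod 2)
  | .a i => (ofAdd (ZMod.castHom (dvd_mul_right 2 n) (ZMod 2) i), ofAdd 0)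
  | .xa i => (ofAdd (ZMod.castHom (dvd_mul_right 2 n) (ZMod 2) i), ofAdd 1)

lemma qf_mul {n : ℕ} (hn : (n : ZMod 2) = 0) (g₁ g₂ : QuaternionGroup n) :
    qf (g₁ * g₂) = qf g₁ * qf g₂ := by
  have neg2 : ∀ x : ZMod 2, -x = x := by decide
  set c := ZMod.castHom (dvd_mul_right 2 n) (ZMod 2) with hc
  have hcn : c ((n : ℕ) : ZMod (2 * n)) = 0 := by rw [map_natCast]; exact hn
  cases g₁ with
  | a i => cases g₂ with
    | a j =>
      show (ofAdd (c (i + j)), ofAdd 0) =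
        (ofAdd (c i) * ofAdd (c j), ofAdd 0 * ofAdd (0 : ZMod 2))
      refine Prod.ext (congrArg ofAdd ?_) (congrArg ofAdd ?_) <;>
        simp only [toAdd_ofAdd]
      · rw [map_add]
      · rw [add_zero]
    | xa j =>
      show (ofAdd (c (j - i)), ofAdd 1) =
        (ofAdd (c i) * ofAdd (c j), ofAdd 0 * ofAdd (1 : ZMod 2))
      refine Prod.ext (congrArg ofAdd ?_) (congrArg ofAdd ?_) <;>
        simp only [toAdd_ofAdd]
      · rw [map_sub, sub_eq_add_neg, neg2, add_comm]
      · rw [zero_add]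
  | xa i => cases g₂ with
    | a j =>
      show (ofAdd (c (i + j)), ofAdd 1) =
        (ofAdd (c i) * ofAdd (c j), ofAdd 1 * ofAdd (0 : ZMod 2))
      refine Prod.ext (congrArg ofAdd ?_) (congrArg ofAdd ?_) <;>
        simp only [toAdd_ofAdd]
      · rw [map_add]
      · rw [add_zero]
    | xa j =>
      show (ofAdd (c ((n : ZMod (2 * n)) + j - i)), ofAdd 0) =
        (ofAdd (c i) * ofAdd (c j), ofAdd 1 * ofAdd (1 : ZMod 2))
      refine Prod.ext (congrArg ofAdd ?_) (congrArg ofAdd ?_) <;>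
        simp only [toAdd_ofAdd]
      · rw [map_sub, map_add, hcn, zero_add, sub_eq_add_neg, neg2, add_comm]
      · decide

theorem cf2_z2_quaternion (m : ℕ) (hm : 2 ≤ m) :
    CF2 (Multiplicative (ZMod 2) × QuaternionGroup (2 ^ (m - 1))) = 0 := by
  set n := 2 ^ (m - 1) with hndef
  have hn : (n : ZMod 2) = 0 := by
    have h2 : (2 : ℕ) ∣ n := dvd_pow_self 2 (by omega)
    exact (ZMod.natCast_eq_zero_iff n 2).2 h2
  rw [CF2, Nat.card_eq_zero]
  left
  constructor
  rintro ⟨⟨H, K⟩, hH, hK, hprod⟩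
  set G := Multiplicative (ZMod 2) × QuaternionGroup n with hGdef
  let φ : QuaternionGroup n →* Multiplicative (ZMod 2) × Multiplicative (ZMod 2) :=
    MonoidHom.mk' qf (qf_mul hn)
  let F : G →* Multiplicative (ZMod 2) ×
      (Multiplicative (ZMod 2) × Multiplicative (ZMod 2)) :=
    (MonoidHom.id (Multiplicative (ZMod 2))).prodMap φ
  set T := Multiplicative (ZMod 2) × (Multiplicative (ZMod 2) × Multiplicative (ZMod 2))
    with hTdef
  have hcases : ∀ x : ZMod 2, x = 0 ∨ x = 1 := by decide
  have hval : ∀ v : Multiplicative (ZMod 2),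
      ZMod.castHom (dvd_mul_right 2 n) (ZMod 2) (((toAdd v).val : ℕ) : ZMod (2 * n))
        = toAdd v := by
    intro v
    rw [map_natCast]
    exact ZMod.natCast_rightInverse _
  have hFsurj : Function.Surjective F := by
    rintro ⟨u, v, w⟩
    rcases hcases (toAdd w) with hw | hw
    · refine ⟨(u, .a (((toAdd v).val : ℕ) : ZMod (2 * n))), ?_⟩
      show (u, (ofAdd (ZMod.castHom (dvd_mul_right 2 n) (ZMod 2)
        (((toAdd v).val : ℕ) : ZMod (2 * n))), ofAdd (0 : ZMod 2))) = (u, v, w)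
      rw [hval, ofAdd_toAdd, ← hw, ofAdd_toAdd]
    · refine ⟨(u, .xa (((toAdd v).val : ℕ) : ZMod (2 * n))), ?_⟩
      show (u, (ofAdd (ZMod.castHom (dvd_mul_right 2 n) (ZMod 2)
        (((toAdd v).val : ℕ) : ZMod (2 * n))), ofAdd (1 : ZMod 2))) = (u, v, w)
      rw [hval, ofAdd_toAdd, ← hw, ofAdd_toAdd]
  have hsq : ∀ t : T, t * t = 1 := by decide
  have hzpow : ∀ (t : T) (i : ℤ), t ^ i = 1 ∨ t ^ i = t := by
    intro t i
    rcases Int.even_or_odd i with ⟨l, hl⟩ | ⟨l, hl⟩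
    · left; subst hl; rw [zpow_add]; exact hsq _
    · right; subst hl
      rw [zpow_add, zpow_one, zpow_mul]
      have h2 : t ^ (2 : ℤ) = 1 := by rw [zpow_two]; exact hsq t
      rw [h2, one_zpow, one_mul]
  obtain ⟨h, hh⟩ := hH
  obtain ⟨k, hk⟩ := hK
  have hχ : Function.Surjective
      (fun bc : Bool × Bool =>
        (if bc.1 then F (h : G) else 1) * (if bc.2 then F (k : G) else 1)) := by
    intro t
    obtain ⟨g, hg⟩ := hFsurj t
    have hgmem : g ∈ (H : Set G) * (K : Set G) := by
      rw [hprod]; exact Set.mem_univ g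
    obtain ⟨p, hp, q, hq, rfl⟩ := hgmem
    obtain ⟨i, hi⟩ := hh ⟨p, hp⟩
    obtain ⟨j, hj⟩ := hk ⟨q, hq⟩
    have hpi : p = (h : G) ^ i := by
      have := congrArg (Subtype.val) hi
      simpa using this.symm
    have hqj : q = (k : G) ^ j := by
      have := congrArg (Subtype.val) hj
      simpa using this.symm
    rw [← hg, hpi, hqj, map_mul, map_zpow, map_zpow]
    rcases hzpow (F (h : G)) i with h1 | h1 <;>
      rcases hzpow (F (k : G)) j with h2 | h2
    · exact ⟨(false, false), by simp [h1, h2]⟩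
    · exact ⟨(false, true), by simp [h1, h2]⟩
    · exact ⟨(true, false), by simp [h1, h2]⟩
    · exact ⟨(true, true), by simp [h1, h2]⟩
  have hle := Nat.card_le_card_of_surjective _ hχ
  have hT : Nat.card T = 8 := by
    have e : Nat.card T = Nat.card (ZMod 2 × ZMod 2 × ZMod 2) := rfl
    rw [e]
    simp [Nat.card_prod, Nat.card_zmod]
  have hBB : Nat.card (Bool × Bool) = 4 := by simp [Nat.card_prod]
  rw [hT, hBB] at hle
  omega
end
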